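/- arXiv:0905.0564 — 7 statements merged into one kernel-verified Lean document; each statement's English description precedes it below -/
import Mathlib

section
/- Let Ω_{SR₁}, Ω_{R₁D}, Ω_{SR₂}, Ω_{R₂D} > 0 and 𝓕_{SR₁}, 𝓕_{R₁D}, 𝓕_{SR₂}, 𝓕_{R₂D} > 0, and let h(x) denote the four-component Gaussian-mixture density h(x) = (1/(√2·π^{3/2}·(Ω_{SR₁}+Ω_{R₁D})(Ω_{SR₂}+Ω_{R₂D})))·[ Ω_{SR₁}Ω_{SR₂}·exp(−x²/(2π²(Ω_{R₁D}𝓕_{R₁D}²+Ω_{R₂D}𝓕_{R₂D}²)))/√(Ω_{R₁D}𝓕_{R₁D}²+Ω_{R₂D}𝓕_{R₂D}²) + Ω_{R₁D}Ω_{SR₂}·exp(−x²/(2π²(Ω_{SR₁}𝓕_{SR₁}²+Ω_{R₂D}𝓕_{R₂D}²)))/√(Ω_{SR₁}𝓕_{SR₁}²+Ω_{R₂D}𝓕_{R₂D}²) + Ω_{R₂D}Ω_{SR₁}·exp(−x²/(2π²(Ω_{SR₂}𝓕_{SR₂}²+Ω_{R₁D}𝓕_{R₁D}²)))/√(Ω_{SR₂}𝓕_{SR₂}²+Ω_{R₁D}𝓕_{R₁D}²)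 + Ω_{R₁D}Ω_{R₂D}·exp(−x²/(2π²(Ω_{SR₁}𝓕_{SR₁}²+Ω_{SR₂}𝓕_{SR₂}²)))/√(Ω_{SR₁}𝓕_{SR₁}²+Ω_{SR₂}𝓕_{SR₂}²) ]. Then ∫₀^∞ x·h(x) dx = (√π/(√2·(Ω_{SR₁}+Ω_{R₁D})(Ω_{SR₂}+Ω_{R₂D})))·[ Ω_{SR₁}Ω_{SR₂}√(Ω_{R₁D}𝓕_{R₁D}²+Ω_{R₂D}𝓕_{R₂D}²) + Ω_{R₁D}Ω_{SR₂}√(Ω_{SR₁}𝓕_{SR₁}²+Ω_{R₂D}𝓕_{R₂D}²) + Ω_{R₂D}Ω_{SR₁}√(Ω_{SR₂}𝓕_{SR₂}²+Ω_{R₁D}𝓕_{R₁D}²) + Ω_{R₁D}Ω_{R₂D}√(Ω_{SR₁}𝓕_{SR₁}²+Ω_{SR₂}𝓕_{SR₂}²) ]. -/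
open MeasureTheory Real

private lemma integral_mul_exp_neg_mul_sq_real' {b : ℝ} (hb : 0 < b) :
    ∫ r in Set.Ioi (0:ℝ), r * Real.exp (-b * r ^ 2) = (2 * b)⁻¹ := by
  have A : ∀ x : ℝ, HasDerivAt (fun x => -(2 * b)⁻¹ * Real.exp (-b * x ^ 2))
      (x * Real.exp (-b * x ^ 2)) x := by
    intro x
    refine (((hasDerivAt_pow 2 x).const_mul (-b)).exp.const_mul (-(2 * b)⁻¹)).congr_deriv ?_
    field_simp
    ring
  have B : Filter.Tendsto (fun y : ℝ ↦ -(2 * b)⁻¹ * Real.exp (-b * y ^ 2))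
      Filter.atTop (nhds (-(2 * b)⁻¹ * 0)) := by
    refine Filter.Tendsto.const_mul _ ?_
    exact Real.tendsto_exp_atBot.comp
      ((Filter.tendsto_pow_atTop two_ne_zero).const_mul_atTop_of_neg (neg_lt_zero.2 hb))
  have := integral_Ioi_of_hasDerivAt_of_tendsto' (a := 0) (fun x _ => A x)
    (integrable_mul_exp_neg_mul_sq hb).integrableOn B
  simpa using this

private lemma key_integral {a : ℝ} (ha : 0 < a) :
    ∫ x in Set.Ioi (0:ℝ), x * Real.exp (-x ^ 2 / (2 * π ^ 2 * a)) = π ^ 2 * a := by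
  have hπ := Real.pi_pos
  have hb : 0 < (2 * π ^ 2 * a)⁻¹ := by positivity
  have : ∀ x : ℝ, -x ^ 2 / (2 * π ^ 2 * a) = -(2 * π ^ 2 * a)⁻¹ * x ^ 2 := by
    intro x; field_simp
  simp_rw [this]
  rw [integral_mul_exp_neg_mul_sq_real' hb]
  rw [mul_inv, inv_inv]
  field_simp

private lemma key_integrable {a : ℝ} (ha : 0 < a) :
    IntegrableOn (fun x : ℝ => x * Real.exp (-x ^ 2 / (2 * π ^ 2 * a))) (Set.Ioi 0) := by
  have hπ := Real.pi_pos
  have hb : 0 < (2 * π ^ 2 * a)⁻¹ := by positivity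
  have : (fun x : ℝ => x * Real.exp (-x ^ 2 / (2 * π ^ 2 * a)))
      = fun x : ℝ => x * Real.exp (-(2 * π ^ 2 * a)⁻¹ * x ^ 2) := by
    funext x; congr 1; congr 1; field_simp
  rw [this]
  exact (integrable_mul_exp_neg_mul_sq hb).integrableOn

private lemma term_eq (a P k : ℝ) (ha : 0 < a) (hP : 0 < P) :
    (1 / (Real.sqrt 2 * π ^ ((3:ℝ)/2) * P)) * (k / Real.sqrt a * (π ^ 2 * a))
      = (Real.sqrt π / (Real.sqrt 2 * P)) * (k * Real.sqrt a) := by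
  have hπ := Real.pi_pos
  have hsa : Real.sqrt a ≠ 0 := (Real.sqrt_pos.mpr ha).ne'
  have hs2 : Real.sqrt 2 ≠ 0 := by positivity
  have hπ32 : (0:ℝ) < π ^ ((3:ℝ)/2) := Real.rpow_pos_of_pos hπ _
  have hππ : π ^ ((3:ℝ)/2) * Real.sqrt π = π ^ 2 := by
    rw [Real.sqrt_eq_rpow, ← Real.rpow_add hπ]
    norm_num
  have haa : a = Real.sqrt a * Real.sqrt a := (Real.mul_self_sqrt ha.le).symm
  rw [← hππ]
  field_simp
  linear_combination k * haa

/-- The half first moment of the four-component Gaussian-mixture density of `Ż`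
(eq. (14) of the paper): `∫₀^∞ ż f_{Ż}(ż) dż` in closed form. -/
theorem half_first_moment_derivative_density
    (ΩSR₁ ΩR₁D ΩSR₂ ΩR₂D FSR₁ FR₁D FSR₂ FR₂D : ℝ)
    (hΩSR₁ : 0 < ΩSR₁) (hΩR₁D : 0 < ΩR₁D) (hΩSR₂ : 0 < ΩSR₂) (hΩR₂D : 0 < ΩR₂D)
    (hFSR₁ : 0 < FSR₁) (hFR₁D : 0 < FR₁D) (hFSR₂ : 0 < FSR₂) (hFR₂D : 0 < FR₂D)
    (h : ℝ → ℝ)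
    (hh : h = fun x =>
      (1 / (Real.sqrt 2 * π ^ ((3 : ℝ) / 2) * ((ΩSR₁ + ΩR₁D) * (ΩSR₂ + ΩR₂D)))) *
        (ΩSR₁ * ΩSR₂ *
            Real.exp (-x ^ 2 / (2 * π ^ 2 * (ΩR₁D * FR₁D ^ 2 + ΩR₂D * FR₂D ^ 2))) /
            Real.sqrt (ΩR₁D * FR₁D ^ 2 + ΩR₂D * FR₂D ^ 2) +
          ΩR₁D * ΩSR₂ *
            Real.exp (-x ^ 2 / (2 * π ^ 2 * (ΩSR₁ * FSR₁ ^ 2 + ΩR₂D * FR₂D ^ 2))) /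
            Real.sqrt (ΩSR₁ * FSR₁ ^ 2 + ΩR₂D * FR₂D ^ 2) +
          ΩR₂D * ΩSR₁ *
            Real.exp (-x ^ 2 / (2 * π ^ 2 * (ΩSR₂ * FSR₂ ^ 2 + ΩR₁D * FR₁D ^ 2))) /
            Real.sqrt (ΩSR₂ * FSR₂ ^ 2 + ΩR₁D * FR₁D ^ 2) +
          ΩR₁D * ΩR₂D *
            Real.exp (-x ^ 2 / (2 * π ^ 2 * (ΩSR₁ * FSR₁ ^ 2 + ΩSR₂ * FSR₂ ^ 2))) /
            Real.sqrt (ΩSR₁ * FSR₁ ^ 2 + ΩSR₂ * FSR₂ ^ 2))) :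
    ∫ x in Set.Ioi (0 : ℝ), x * h x =
      (Real.sqrt π / (Real.sqrt 2 * ((ΩSR₁ + ΩR₁D) * (ΩSR₂ + ΩR₂D)))) *
        (ΩSR₁ * ΩSR₂ * Real.sqrt (ΩR₁D * FR₁D ^ 2 + ΩR₂D * FR₂D ^ 2) +
          ΩR₁D * ΩSR₂ * Real.sqrt (ΩSR₁ * FSR₁ ^ 2 + ΩR₂D * FR₂D ^ 2) +
          ΩR₂D * ΩSR₁ * Real.sqrt (ΩSR₂ * FSR₂ ^ 2 + ΩR₁D * FR₁D ^ 2) +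
          ΩR₁D * ΩR₂D * Real.sqrt (ΩSR₁ * FSR₁ ^ 2 + ΩSR₂ * FSR₂ ^ 2)) := by
  set a₁ := ΩR₁D * FR₁D ^ 2 + ΩR₂D * FR₂D ^ 2 with ha₁def
  set a₂ := ΩSR₁ * FSR₁ ^ 2 + ΩR₂D * FR₂D ^ 2 with ha₂def
  set a₃ := ΩSR₂ * FSR₂ ^ 2 + ΩR₁D * FR₁D ^ 2 with ha₃def
  set a₄ := ΩSR₁ * FSR₁ ^ 2 + ΩSR₂ * FSR₂ ^ 2 with ha₄def
  set P := (ΩSR₁ + ΩR₁D) * (ΩSR₂ + ΩR₂D) with hPdef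
  have ha₁ : 0 < a₁ := by positivity
  have ha₂ : 0 < a₂ := by positivity
  have ha₃ : 0 < a₃ := by positivity
  have ha₄ : 0 < a₄ := by positivity
  have hP : 0 < P := by positivity
  set c := 1 / (Real.sqrt 2 * π ^ ((3 : ℝ) / 2) * P) with hcdef
  set f₁ := fun x : ℝ => x * Real.exp (-x ^ 2 / (2 * π ^ 2 * a₁)) with hf₁
  set f₂ := fun x : ℝ => x * Real.exp (-x ^ 2 / (2 * π ^ 2 * a₂)) with hf₂
  set f₃ := fun x : ℝ => x * Real.exp (-x ^ 2 / (2 * π ^ 2 * a₃)) with hf₃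
  set f₄ := fun x : ℝ => x * Real.exp (-x ^ 2 / (2 * π ^ 2 * a₄)) with hf₄
  have hx : ∀ x : ℝ, x * h x =
      c * (ΩSR₁ * ΩSR₂ / Real.sqrt a₁ * f₁ x + ΩR₁D * ΩSR₂ / Real.sqrt a₂ * f₂ x +
        ΩR₂D * ΩSR₁ / Real.sqrt a₃ * f₃ x + ΩR₁D * ΩR₂D / Real.sqrt a₄ * f₄ x) := by
    intro x
    rw [hh]
    simp only [hf₁, hf₂, hf₃, hf₄]
    ring
  have i₁ := (key_integrable ha₁).const_mul (ΩSR₁ * ΩSR₂ / Real.sqrt a₁)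
  have i₂ := (key_integrable ha₂).const_mul (ΩR₁D * ΩSR₂ / Real.sqrt a₂)
  have i₃ := (key_integrable ha₃).const_mul (ΩR₂D * ΩSR₁ / Real.sqrt a₃)
  have i₄ := (key_integrable ha₄).const_mul (ΩR₁D * ΩR₂D / Real.sqrt a₄)
  simp only [hx]
  simp only [hf₁, hf₂, hf₃, hf₄]
  have e1 : (∫ x in Set.Ioi (0:ℝ), ΩSR₁ * ΩSR₂ / Real.sqrt a₁ * (x * Real.exp (-x ^ 2 / (2 * π ^ 2 * a₁))) + ΩR₁D * ΩSR₂ / Real.sqrt a₂ * (x * Real.exp (-x ^ 2 / (2 * π ^ 2 * a₂))) + ΩR₂D * ΩSR₁ / Real.sqrt a₃ * (x * Real.exp (-x ^ 2 / (2 * π ^ 2 * a₃))) + ΩR₁D * ΩR₂D / Real.sqrt a₄ * (x * Real.exp (-x ^ 2 / (2 * π ^ 2 * a₄))))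
      = (∫ x in Set.Ioi (0:ℝ), ΩSR₁ * ΩSR₂ / Real.sqrt a₁ * (x * Real.exp (-x ^ 2 / (2 * π ^ 2 * a₁))) + ΩR₁D * ΩSR₂ / Real.sqrt a₂ * (x * Real.exp (-x ^ 2 / (2 * π ^ 2 * a₂))) + ΩR₂D * ΩSR₁ / Real.sqrt a₃ * (x * Real.exp (-x ^ 2 / (2 * π ^ 2 * a₃)))) + (∫ x in Set.Ioi (0:ℝ), ΩR₁D * ΩR₂D / Real.sqrt a₄ * (x * Real.exp (-x ^ 2 / (2 * π ^ 2 * a₄)))) := integral_add ((i₁.add i₂).add i₃) i₄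
  have e2 : (∫ x in Set.Ioi (0:ℝ), ΩSR₁ * ΩSR₂ / Real.sqrt a₁ * (x * Real.exp (-x ^ 2 / (2 * π ^ 2 * a₁))) + ΩR₁D * ΩSR₂ / Real.sqrt a₂ * (x * Real.exp (-x ^ 2 / (2 * π ^ 2 * a₂))) + ΩR₂D * ΩSR₁ / Real.sqrt a₃ * (x * Real.exp (-x ^ 2 / (2 * π ^ 2 * a₃)))) = (∫ x in Set.Ioi (0:ℝ), ΩSR₁ * ΩSR₂ / Real.sqrt a₁ * (x * Real.exp (-x ^ 2 / (2 * π ^ 2 * a₁))) + ΩR₁D * ΩSR₂ / Real.sqrt a₂ * (x * Real.exp (-x ^ 2 / (2 * π ^ 2 * a₂)))) + (∫ x in Set.Ioi (0:ℝ), ΩR₂D * ΩSR₁ / Real.sqrt a₃ * (x * Real.exp (-x ^ 2 / (2 * π ^ 2 * a₃)))) := integral_add (i₁.add i₂) i₃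
  have e3 : (∫ x in Set.Ioi (0:ℝ), ΩSR₁ * ΩSR₂ / Real.sqrt a₁ * (x * Real.exp (-x ^ 2 / (2 * π ^ 2 * a₁))) + ΩR₁D * ΩSR₂ / Real.sqrt a₂ * (x * Real.exp (-x ^ 2 / (2 * π ^ 2 * a₂)))) = (∫ x in Set.Ioi (0:ℝ), ΩSR₁ * ΩSR₂ / Real.sqrt a₁ * (x * Real.exp (-x ^ 2 / (2 * π ^ 2 * a₁)))) + (∫ x in Set.Ioi (0:ℝ), ΩR₁D * ΩSR₂ / Real.sqrt a₂ * (x * Real.exp (-x ^ 2 / (2 * π ^ 2 * a₂)))) := integral_add i₁ i₂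
  rw [integral_const_mul, e1, e2, e3,
    integral_const_mul, integral_const_mul, integral_const_mul, integral_const_mul,
    key_integral ha₁, key_integral ha₂, key_integral ha₃, key_integral ha₄]
  rw [mul_add, mul_add, mul_add, hcdef,
    term_eq a₁ P _ ha₁ hP, term_eq a₂ P _ ha₂ hP, term_eq a₃ P _ ha₃ hP,
    term_eq a₄ P _ ha₄ hP]
  ring
end

section
/- Let Ω_{SR₁}, Ω_{R₁D}, Ω_{SR₂}, Ω_{R₂D} > 0 and 𝓕_{SR₁}, 𝓕_{R₁D}, 𝓕_{SR₂}, 𝓕_{R₂D} > 0, and set Ωᵢ = Ω_{SRᵢ}Ω_{RᵢD}/(Ω_{SRᵢ}+Ω_{RᵢD}) for i ∈ {1,2}. Let f_{aᵢ}(x) = 2x·((Ω_{SRᵢ}+Ω_{RᵢD})/(Ω_{SRᵢ}Ω_{RᵢD}))·exp(−x²(Ω_{SRᵢ}+Ω_{RᵢD})/(Ω_{SRᵢ}Ω_{RᵢD})) for x ≥ 0, and let h be the four-component Gaussian-mixture density with mixture weights Ω_{SR₁}Ω_{SR₂}, Ω_{R₁D}Ω_{SR₂}, Ω_{R₂D}Ω_{SR₁},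 Ω_{R₁D}Ω_{R₂D} (each divided by (Ω_{SR₁}+Ω_{R₁D})(Ω_{SR₂}+Ω_{R₂D})) and corresponding variances π²(Ω_{R₁D}𝓕_{R₁D}²+Ω_{R₂D}𝓕_{R₂D}²), π²(Ω_{SR₁}𝓕_{SR₁}²+Ω_{R₂D}𝓕_{R₂D}²), π²(Ω_{SR₂}𝓕_{SR₂}²+Ω_{R₁D}𝓕_{R₁D}²), π²(Ω_{SR₁}𝓕_{SR₁}²+Ω_{SR₂}𝓕_{SR₂}²). Then the relay switching rate of two-relay opportunistic relaying, SR_OR = 2·(∫₀^∞ f_{a₁}(x) f_{a₂}(x) dx)·(∫₀^∞ x·h(x) dx), equals (π√(2Ω₁Ω₂)/((Ω₁+Ω₂)^{3/2}(Ω_{SR₁}+Ω_{R₁D})(Ω_{SR₂}+Ω_{R₂D})))·[ Ω_{SR₁}Ω_{SR₂}√(Ω_{R₁D}𝓕_{R₁D}²+Ω_{R₂D}𝓕_{R₂D}²) + Ω_{R₁D}Ω_{SR₂}√(Ω_{SR₁}𝓕_{SR₁}²+Ω_{R₂D}𝓕_{R₂D}²) + Ω_{R₂D}Ω_{SR₁}√(Ω_{SR₂}𝓕_{SR₂}²+Ω_{R₁D}𝓕_{R₁D}²)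 + Ω_{R₁D}Ω_{R₂D}√(Ω_{SR₁}𝓕_{SR₁}²+Ω_{SR₂}𝓕_{SR₂}²) ]. -/
open MeasureTheory Real

lemma my_int_sq (b : ℝ) (hb : 0 < b) :
    ∫ x in Set.Ioi (0:ℝ), x ^ 2 * Real.exp (-b * x ^ 2)
      = Real.sqrt π / 4 * b ^ (-(3:ℝ)/2) := by
  have h := integral_rpow_mul_exp_neg_mul_rpow (p := 2) (q := 2) (by norm_num) (by norm_num) hb
  have hcong : ∫ x in Set.Ioi (0:ℝ), x ^ 2 * Real.exp (-b * x ^ 2)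
      = ∫ x in Set.Ioi (0:ℝ), x ^ (2:ℝ) * Real.exp (-b * x ^ (2:ℝ)) := by
    refine setIntegral_congr_fun measurableSet_Ioi (fun x hx => ?_)
    rw [show ((2:ℝ)) = ((2:ℕ):ℝ) by norm_num, Real.rpow_natCast]
  rw [hcong, h]
  have hG : Real.Gamma ((2+1)/2) = Real.sqrt π / 2 := by
    rw [show ((2+1)/2 : ℝ) = 1/2 + 1 by norm_num, Real.Gamma_add_one (by norm_num),
      Real.Gamma_one_half_eq]
    ring
  rw [hG]
  ring_nf

lemma my_int_lin (b : ℝ) (hb : 0 < b) :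
    ∫ x in Set.Ioi (0:ℝ), x * Real.exp (-b * x ^ 2) = 1 / (2 * b) := by
  have h := integral_rpow_mul_exp_neg_mul_rpow (p := 2) (q := 1) (by norm_num) (by norm_num) hb
  have hcong : ∫ x in Set.Ioi (0:ℝ), x * Real.exp (-b * x ^ 2)
      = ∫ x in Set.Ioi (0:ℝ), x ^ (1:ℝ) * Real.exp (-b * x ^ (2:ℝ)) := by
    refine setIntegral_congr_fun measurableSet_Ioi (fun x hx => ?_)
    rw [Real.rpow_one, show ((2:ℝ)) = ((2:ℕ):ℝ) by norm_num, Real.rpow_natCast]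
  rw [hcong, h, show (((1:ℝ)+1)/2) = (1:ℝ) by norm_num, Real.Gamma_one,
    show (-((1:ℝ)+1)/2) = (-1 : ℝ) by norm_num, Real.rpow_neg_one]
  field_simp

lemma my_gm_eq (w v : ℝ) :
    (fun x : ℝ => x * (w * (Real.exp (-x^2/(2*v)) / Real.sqrt (2*π*v))))
      = fun x => (w / Real.sqrt (2*π*v)) * (x * Real.exp (-(1/(2*v)) * x^2)) := by
  funext x
  rw [show -x^2/(2*v) = -(1/(2*v)) * x^2 by ring]
  ring

lemma my_gm_integrable (w v : ℝ) (hv : 0 < v) :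
    IntegrableOn (fun x : ℝ => x * (w * (Real.exp (-x^2/(2*v)) / Real.sqrt (2*π*v))))
      (Set.Ioi 0) := by
  rw [my_gm_eq]
  exact ((integrable_mul_exp_neg_mul_sq (by positivity)).const_mul _).integrableOn

lemma my_gm_moment (w v : ℝ) (hv : 0 < v) :
    ∫ x in Set.Ioi (0:ℝ), x * (w * (Real.exp (-x^2/(2*v)) / Real.sqrt (2*π*v)))
      = w * Real.sqrt v / Real.sqrt (2*π) := by
  rw [my_gm_eq, integral_const_mul, my_int_lin _ (by positivity)]
  have hsv : Real.sqrt v ≠ 0 := by positivity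
  have hs2pi : Real.sqrt (2*π) ≠ 0 := by positivity
  rw [Real.sqrt_mul (by positivity : (0:ℝ) ≤ 2*π)]
  have hvv : Real.sqrt v * Real.sqrt v = v := Real.mul_self_sqrt hv.le
  field_simp
  linear_combination (-w) * hvv

lemma my_rpow32 (a : ℝ) (ha : 0 < a) : a ^ ((3:ℝ)/2) = a * Real.sqrt a := by
  rw [show (3:ℝ)/2 = 1 + 1/2 by norm_num, Real.rpow_add ha, Real.rpow_one,
    ← Real.sqrt_eq_rpow]
set_option maxHeartbeats 2000000 in
/-- Theorem 1 of the paper (eq. (7)): the relay switching rate of two-relay opportunistic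
relaying over i.n.i.d. Rayleigh fading, `SR_OR = 2 f_Z(0) ∫₀^∞ ż f_{Ż}(ż) dż`, in closed
form. Here `fa₁, fa₂` are the Rayleigh densities of the min-equivalent virtual channel
gains and `h` is the four-component Gaussian-mixture density of `Ż`. -/
theorem relay_switching_rate_OR_two_relays
    (ΩSR₁ ΩR₁D ΩSR₂ ΩR₂D FSR₁ FR₁D FSR₂ FR₂D : ℝ)
    (hΩSR₁ : 0 < ΩSR₁) (hΩR₁D : 0 < ΩR₁D) (hΩSR₂ : 0 < ΩSR₂) (hΩR₂D : 0 < ΩR₂D)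
    (hFSR₁ : 0 < FSR₁) (hFR₁D : 0 < FR₁D) (hFSR₂ : 0 < FSR₂) (hFR₂D : 0 < FR₂D)
    (Ω₁ Ω₂ : ℝ)
    (hΩ₁ : Ω₁ = ΩSR₁ * ΩR₁D / (ΩSR₁ + ΩR₁D))
    (hΩ₂ : Ω₂ = ΩSR₂ * ΩR₂D / (ΩSR₂ + ΩR₂D))
    (fa₁ fa₂ h : ℝ → ℝ)
    (hfa₁ : fa₁ = fun x => 2 * x * ((ΩSR₁ + ΩR₁D) / (ΩSR₁ * ΩR₁D)) *
      Real.exp (-x ^ 2 * (ΩSR₁ + ΩR₁D) / (ΩSR₁ * ΩR₁D)))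
    (hfa₂ : fa₂ = fun x => 2 * x * ((ΩSR₂ + ΩR₂D) / (ΩSR₂ * ΩR₂D)) *
      Real.exp (-x ^ 2 * (ΩSR₂ + ΩR₂D) / (ΩSR₂ * ΩR₂D)))
    (hh : h = fun x =>
      (ΩSR₁ * ΩSR₂ / ((ΩSR₁ + ΩR₁D) * (ΩSR₂ + ΩR₂D))) *
        (Real.exp (-x ^ 2 / (2 * (π ^ 2 * (ΩR₁D * FR₁D ^ 2 + ΩR₂D * FR₂D ^ 2)))) /
          Real.sqrt (2 * π * (π ^ 2 * (ΩR₁D * FR₁D ^ 2 + ΩR₂D * FR₂D ^ 2)))) +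
      (ΩR₁D * ΩSR₂ / ((ΩSR₁ + ΩR₁D) * (ΩSR₂ + ΩR₂D))) *
        (Real.exp (-x ^ 2 / (2 * (π ^ 2 * (ΩSR₁ * FSR₁ ^ 2 + ΩR₂D * FR₂D ^ 2)))) /
          Real.sqrt (2 * π * (π ^ 2 * (ΩSR₁ * FSR₁ ^ 2 + ΩR₂D * FR₂D ^ 2)))) +
      (ΩR₂D * ΩSR₁ / ((ΩSR₁ + ΩR₁D) * (ΩSR₂ + ΩR₂D))) *
        (Real.exp (-x ^ 2 / (2 * (π ^ 2 * (ΩSR₂ * FSR₂ ^ 2 + ΩR₁D * FR₁D ^ 2)))) /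
          Real.sqrt (2 * π * (π ^ 2 * (ΩSR₂ * FSR₂ ^ 2 + ΩR₁D * FR₁D ^ 2)))) +
      (ΩR₁D * ΩR₂D / ((ΩSR₁ + ΩR₁D) * (ΩSR₂ + ΩR₂D))) *
        (Real.exp (-x ^ 2 / (2 * (π ^ 2 * (ΩSR₁ * FSR₁ ^ 2 + ΩSR₂ * FSR₂ ^ 2)))) /
          Real.sqrt (2 * π * (π ^ 2 * (ΩSR₁ * FSR₁ ^ 2 + ΩSR₂ * FSR₂ ^ 2))))) :
    2 * (∫ x in Set.Ioi (0 : ℝ), fa₁ x * fa₂ x) * (∫ x in Set.Ioi (0 : ℝ), x * h x) =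
      (π * Real.sqrt (2 * Ω₁ * Ω₂) /
          ((Ω₁ + Ω₂) ^ ((3 : ℝ) / 2) * ((ΩSR₁ + ΩR₁D) * (ΩSR₂ + ΩR₂D)))) *
        (ΩSR₁ * ΩSR₂ * Real.sqrt (ΩR₁D * FR₁D ^ 2 + ΩR₂D * FR₂D ^ 2) +
          ΩR₁D * ΩSR₂ * Real.sqrt (ΩSR₁ * FSR₁ ^ 2 + ΩR₂D * FR₂D ^ 2) +
          ΩR₂D * ΩSR₁ * Real.sqrt (ΩSR₂ * FSR₂ ^ 2 + ΩR₁D * FR₁D ^ 2) +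
          ΩR₁D * ΩR₂D * Real.sqrt (ΩSR₁ * FSR₁ ^ 2 + ΩSR₂ * FSR₂ ^ 2)) := by
  have hΩ₁pos : 0 < Ω₁ := by rw [hΩ₁]; positivity
  have hΩ₂pos : 0 < Ω₂ := by rw [hΩ₂]; positivity
  have hu : 0 < Ω₁ + Ω₂ := by positivity
  have hm : 0 < Ω₁ * Ω₂ := by positivity
  set c₁ : ℝ := (ΩSR₁ + ΩR₁D) / (ΩSR₁ * ΩR₁D) with hc₁
  set c₂ : ℝ := (ΩSR₂ + ΩR₂D) / (ΩSR₂ * ΩR₂D) with hc₂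
  have hc₁pos : 0 < c₁ := by rw [hc₁]; positivity
  have hc₂pos : 0 < c₂ := by rw [hc₂]; positivity
  set S₁ : ℝ := ΩR₁D * FR₁D ^ 2 + ΩR₂D * FR₂D ^ 2 with hS₁
  set S₂ : ℝ := ΩSR₁ * FSR₁ ^ 2 + ΩR₂D * FR₂D ^ 2 with hS₂
  set S₃ : ℝ := ΩSR₂ * FSR₂ ^ 2 + ΩR₁D * FR₁D ^ 2 with hS₃
  set S₄ : ℝ := ΩSR₁ * FSR₁ ^ 2 + ΩSR₂ * FSR₂ ^ 2 with hS₄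
  have hS₁p : 0 < S₁ := by rw [hS₁]; positivity
  have hS₂p : 0 < S₂ := by rw [hS₂]; positivity
  have hS₃p : 0 < S₃ := by rw [hS₃]; positivity
  have hS₄p : 0 < S₄ := by rw [hS₄]; positivity
  set D : ℝ := (ΩSR₁ + ΩR₁D) * (ΩSR₂ + ΩR₂D) with hD
  have hDpos : 0 < D := by rw [hD]; positivity
  -- first integral
  have hI₁ : ∫ x in Set.Ioi (0:ℝ), fa₁ x * fa₂ x
      = 4 * c₁ * c₂ * (Real.sqrt π / 4 * (c₁ + c₂) ^ (-(3:ℝ)/2)) := by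
    have hpt : ∀ x : ℝ, fa₁ x * fa₂ x = (4*c₁*c₂) * (x^2 * Real.exp (-(c₁+c₂)*x^2)) := by
      intro x
      simp only [hfa₁, hfa₂]
      rw [show -(c₁+c₂)*x^2 = -x^2*(ΩSR₁+ΩR₁D)/(ΩSR₁*ΩR₁D)
          + -x^2*(ΩSR₂+ΩR₂D)/(ΩSR₂*ΩR₂D) by rw [hc₁, hc₂]; ring, Real.exp_add]
      ring
    rw [setIntegral_congr_fun measurableSet_Ioi (fun x _ => hpt x), integral_const_mul,
      my_int_sq _ (by positivity)]
  -- second integral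
  have hI₂ : ∫ x in Set.Ioi (0:ℝ), x * h x
      = ((ΩSR₁*ΩSR₂/D) * Real.sqrt (π^2*S₁) + (ΩR₁D*ΩSR₂/D) * Real.sqrt (π^2*S₂)
        + (ΩR₂D*ΩSR₁/D) * Real.sqrt (π^2*S₃) + (ΩR₁D*ΩR₂D/D) * Real.sqrt (π^2*S₄))
          / Real.sqrt (2*π) := by
    have hpt : ∀ x : ℝ, x * h x =
        x * ((ΩSR₁*ΩSR₂/D) * (Real.exp (-x^2/(2*(π^2*S₁))) / Real.sqrt (2*π*(π^2*S₁))))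
      + x * ((ΩR₁D*ΩSR₂/D) * (Real.exp (-x^2/(2*(π^2*S₂))) / Real.sqrt (2*π*(π^2*S₂))))
      + x * ((ΩR₂D*ΩSR₁/D) * (Real.exp (-x^2/(2*(π^2*S₃))) / Real.sqrt (2*π*(π^2*S₃))))
      + x * ((ΩR₁D*ΩR₂D/D) * (Real.exp (-x^2/(2*(π^2*S₄))) / Real.sqrt (2*π*(π^2*S₄)))) := by
      intro x; simp only [hh]; ring
    rw [setIntegral_congr_fun measurableSet_Ioi (fun x _ => hpt x)]
    have g1 := my_gm_integrable (ΩSR₁*ΩSR₂/D) (π^2*S₁) (by positivity)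
    have g2 := my_gm_integrable (ΩR₁D*ΩSR₂/D) (π^2*S₂) (by positivity)
    have g3 := my_gm_integrable (ΩR₂D*ΩSR₁/D) (π^2*S₃) (by positivity)
    have g4 := my_gm_integrable (ΩR₁D*ΩR₂D/D) (π^2*S₄) (by positivity)
    have g12 : IntegrableOn (fun x : ℝ =>
        x * (ΩSR₁*ΩSR₂/D * (Real.exp (-x^2/(2*(π^2*S₁))) / Real.sqrt (2*π*(π^2*S₁))))
      + x * (ΩR₁D*ΩSR₂/D * (Real.exp (-x^2/(2*(π^2*S₂))) / Real.sqrt (2*π*(π^2*S₂)))))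
        (Set.Ioi 0) := g1.add g2
    have g123 : IntegrableOn (fun x : ℝ =>
        (x * (ΩSR₁*ΩSR₂/D * (Real.exp (-x^2/(2*(π^2*S₁))) / Real.sqrt (2*π*(π^2*S₁))))
      + x * (ΩR₁D*ΩSR₂/D * (Real.exp (-x^2/(2*(π^2*S₂))) / Real.sqrt (2*π*(π^2*S₂)))))
      + x * (ΩR₂D*ΩSR₁/D * (Real.exp (-x^2/(2*(π^2*S₃))) / Real.sqrt (2*π*(π^2*S₃)))))
        (Set.Ioi 0) := g12.add g3
    rw [integral_add g123 g4, integral_add g12 g3, integral_add g1 g2,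
      my_gm_moment _ _ (by positivity : (0:ℝ) < π^2*S₁),
      my_gm_moment _ _ (by positivity : (0:ℝ) < π^2*S₂),
      my_gm_moment _ _ (by positivity : (0:ℝ) < π^2*S₃),
      my_gm_moment _ _ (by positivity : (0:ℝ) < π^2*S₄)]
    ring
  have hv : ∀ S : ℝ, 0 ≤ S → Real.sqrt (π^2*S) = π * Real.sqrt S := fun S hS => by
    rw [Real.sqrt_mul (by positivity), Real.sqrt_sq pi_pos.le]
  have hcc : c₁ + c₂ = (Ω₁+Ω₂)/(Ω₁*Ω₂) := by
    rw [hc₁, hc₂, hΩ₁, hΩ₂]; field_simp; ring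
  have hK : (c₁+c₂) ^ (-(3:ℝ)/2)
      = (Ω₁*Ω₂) * Real.sqrt (Ω₁*Ω₂) / ((Ω₁+Ω₂) * Real.sqrt (Ω₁+Ω₂)) := by
    rw [hcc, show (-(3:ℝ)/2) = -((3:ℝ)/2) by norm_num, Real.rpow_neg (by positivity),
      ← Real.inv_rpow (by positivity), inv_div, my_rpow32 _ (by positivity),
      Real.sqrt_div hm.le, div_mul_div_comm]
  have hc1 : c₁ = 1/Ω₁ := by rw [hc₁, hΩ₁]; field_simp
  have hc2 : c₂ = 1/Ω₂ := by rw [hc₂, hΩ₂]; field_simp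
  have h2m : Real.sqrt (2*Ω₁*Ω₂) = Real.sqrt 2 * Real.sqrt (Ω₁*Ω₂) := by
    rw [show 2*Ω₁*Ω₂ = 2*(Ω₁*Ω₂) by ring, Real.sqrt_mul (by norm_num)]
  have h2pi : Real.sqrt (2*π) = Real.sqrt 2 * Real.sqrt π := Real.sqrt_mul (by norm_num) π
  have hu32 : (Ω₁+Ω₂) ^ ((3:ℝ)/2) = (Ω₁+Ω₂) * Real.sqrt (Ω₁+Ω₂) := my_rpow32 _ hu
  have s2 : Real.sqrt 2 * Real.sqrt 2 = 2 := Real.mul_self_sqrt (by norm_num)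
  rw [hI₁, hI₂, hv _ hS₁p.le, hv _ hS₂p.le, hv _ hS₃p.le, hv _ hS₄p.le,
    hK, hc1, hc2, h2pi, h2m, hu32]
  have hsu : Real.sqrt (Ω₁+Ω₂) ≠ 0 := by positivity
  have hsp : Real.sqrt π ≠ 0 := by positivity
  have hs2 : Real.sqrt 2 ≠ 0 := by positivity
  have hA2 : 2 * (4*(1/Ω₁)*(1/Ω₂)*(Real.sqrt π/4*(Ω₁*Ω₂*Real.sqrt (Ω₁*Ω₂)
        /((Ω₁+Ω₂)*Real.sqrt (Ω₁+Ω₂))))) * (π/(Real.sqrt 2*Real.sqrt π))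
      = π*(Real.sqrt 2*Real.sqrt (Ω₁*Ω₂))/((Ω₁+Ω₂)*Real.sqrt (Ω₁+Ω₂)) := by
    field_simp
    linear_combination (-1 : ℝ) * s2
  clear_value S₁ S₂ S₃ S₄ D
  generalize hG : Ω₁ + Ω₂ = u at hA2 ⊢
  linear_combination ((ΩSR₁ * ΩSR₂ * Real.sqrt S₁ + ΩR₁D * ΩSR₂ * Real.sqrt S₂ +
      ΩR₂D * ΩSR₁ * Real.sqrt S₃ + ΩR₁D * ΩR₂D * Real.sqrt S₄) / D) * hA2
end

section
/- Let Ω > 0 and 𝓕_{SR₁}, 𝓕_{R₁D}, 𝓕_{SR₂}, 𝓕_{R₂D} > 0. When Ω_{SR₁} = Ω_{R₁D} = Ω_{SR₂} = Ω_{R₂D} = Ω (i.i.d. fading), the two-relay OR switching-rate expression (π√(2Ω₁Ω₂)/((Ω₁+Ω₂)^{3/2}(Ω_{SR₁}+Ω_{R₁D})(Ω_{SR₂}+Ω_{R₂D})))·[ Ω_{SR₁}Ω_{SR₂}√(Ω_{R₁D}𝓕_{R₁D}²+Ω_{R₂D}𝓕_{R₂D}²) + Ω_{R₁D}Ω_{SR₂}√(Ω_{SR₁}𝓕_{SR₁}²+Ω_{R₂D}𝓕_{R₂D}²)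 + Ω_{R₂D}Ω_{SR₁}√(Ω_{SR₂}𝓕_{SR₂}²+Ω_{R₁D}𝓕_{R₁D}²) + Ω_{R₁D}Ω_{R₂D}√(Ω_{SR₁}𝓕_{SR₁}²+Ω_{SR₂}𝓕_{SR₂}²) ], with Ωᵢ = Ω_{SRᵢ}Ω_{RᵢD}/(Ω_{SRᵢ}+Ω_{RᵢD}), simplifies to (π/(4√2))·[ √(𝓕_{SR₁}²+𝓕_{SR₂}²) + √(𝓕_{SR₁}²+𝓕_{R₂D}²) + √(𝓕_{R₁D}²+𝓕_{SR₂}²) + √(𝓕_{R₁D}²+𝓕_{R₂D}²) ]; in particular it is independent of Ω. -/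
open Real

/-- Corollary 2, eq. (17) of the paper: in the i.i.d. case
`Ω_{SR₁} = Ω_{R₁D} = Ω_{SR₂} = Ω_{R₂D} = Ω` the closed-form relay switching rate of
two-relay opportunistic relaying simplifies to
`(π/(4√2)) [√(𝓕_{SR₁}²+𝓕_{SR₂}²) + √(𝓕_{SR₁}²+𝓕_{R₂D}²) + √(𝓕_{R₁D}²+𝓕_{SR₂}²)
  + √(𝓕_{R₁D}²+𝓕_{R₂D}²)]`, which is independent of `Ω`. -/
theorem relay_switching_rate_OR_iid
    (Ω FSR₁ FR₁D FSR₂ FR₂D : ℝ) (hΩ : 0 < Ω)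
    (hFSR₁ : 0 < FSR₁) (hFR₁D : 0 < FR₁D) (hFSR₂ : 0 < FSR₂) (hFR₂D : 0 < FR₂D)
    (Ω₁ Ω₂ : ℝ) (hΩ₁ : Ω₁ = Ω * Ω / (Ω + Ω)) (hΩ₂ : Ω₂ = Ω * Ω / (Ω + Ω)) :
    (π * Real.sqrt (2 * Ω₁ * Ω₂) /
        ((Ω₁ + Ω₂) ^ ((3 : ℝ) / 2) * ((Ω + Ω) * (Ω + Ω)))) *
      (Ω * Ω * Real.sqrt (Ω * FR₁D ^ 2 + Ω * FR₂D ^ 2) +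
        Ω * Ω * Real.sqrt (Ω * FSR₁ ^ 2 + Ω * FR₂D ^ 2) +
        Ω * Ω * Real.sqrt (Ω * FSR₂ ^ 2 + Ω * FR₁D ^ 2) +
        Ω * Ω * Real.sqrt (Ω * FSR₁ ^ 2 + Ω * FSR₂ ^ 2)) =
      (π / (4 * Real.sqrt 2)) *
        (Real.sqrt (FSR₁ ^ 2 + FSR₂ ^ 2) + Real.sqrt (FSR₁ ^ 2 + FR₂D ^ 2) +
          Real.sqrt (FR₁D ^ 2 + FSR₂ ^ 2) + Real.sqrt (FR₁D ^ 2 + FR₂D ^ 2)) := by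
  have hΩne : Ω ≠ 0 := ne_of_gt hΩ
  have h1 : Ω₁ = Ω / 2 := by rw [hΩ₁]; field_simp; ring
  have h2 : Ω₂ = Ω / 2 := by rw [hΩ₂]; field_simp; ring
  subst h1 h2
  set s := Real.sqrt Ω with hs
  have hspos : 0 < s := Real.sqrt_pos.mpr hΩ
  have hs2 : s ^ 2 = Ω := Real.sq_sqrt hΩ.le
  have hmul : ∀ a b : ℝ, Real.sqrt (Ω * a + Ω * b) = s * Real.sqrt (a + b) := by
    intro a b
    rw [← mul_add, Real.sqrt_mul hΩ.le]
  have hrpow : (Ω / 2 + Ω / 2) ^ ((3 : ℝ) / 2) = s ^ 3 := by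
    have h : Ω / 2 + Ω / 2 = Ω := by ring
    rw [h, show ((3 : ℝ) / 2) = (3 : ℕ) * ((1 : ℝ)/2) by norm_num,
      Real.rpow_mul hΩ.le, Real.rpow_natCast, ← Real.sqrt_eq_rpow, ← hs2,
      show ((s:ℝ)^2)^3 = (s^3)^2 by ring, Real.sqrt_sq (by positivity)]
  have hsq2 : Real.sqrt (2 * (Ω / 2) * (Ω / 2)) = Ω / Real.sqrt 2 := by
    rw [show 2 * (Ω / 2) * (Ω / 2) = Ω ^ 2 / 2 by ring,
      Real.sqrt_div (sq_nonneg Ω), Real.sqrt_sq hΩ.le]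
  have h2pos : (0:ℝ) < Real.sqrt 2 := Real.sqrt_pos.mpr (by norm_num)
  rw [hrpow, hsq2, hmul, hmul, hmul, hmul, add_comm (FSR₂ ^ 2) (FR₁D ^ 2), ← hs2]
  field_simp
  ring
end

section
/- Define g(L) = L(L−1)·Σ_{l=0}^{L−2} (−1)^l · C(L−2,l) · (1/(l+2))^{3/2} for integers L ≥ 2. Then g is strictly increasing: g(L+1) > g(L) for every L ≥ 2. Consequently, the relay switching rate √2·π𝓕·g(L) of L-relay opportunistic relaying over i.i.d. Rayleigh fading is a strictly increasing function of the number of relays L. -/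
open Real

/-- `g L = L(L−1) Σ_{l=0}^{L−2} (−1)^l C(L−2,l) (1/(l+2))^{3/2}`, the normalized relay
switching rate of `L`-relay opportunistic relaying over i.i.d. Rayleigh fading. -/
noncomputable def orSwitchingSum (L : ℕ) : ℝ :=
  (L : ℝ) * ((L : ℝ) - 1) *
    ∑ l ∈ Finset.range (L - 1),
      (-1 : ℝ) ^ l * (Nat.choose (L - 2) l : ℝ) * (1 / ((l : ℝ) + 2)) ^ ((3 : ℝ) / 2)

section OrAux
open MeasureTheory Set Filter Topology


lemma integrableOn_base {c : ℝ} (hc : 0 < c) :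
    IntegrableOn (fun t : ℝ => t ^ ((1:ℝ)/2) * exp (-(c * t))) (Ioi 0) := by
  have h := integrableOn_rpow_mul_exp_neg_mul_rpow (by norm_num : (-1:ℝ) < 1/2) zero_lt_one hc
  refine h.congr_fun (fun x hx => ?_) measurableSet_Ioi
  dsimp only
  rw [rpow_one, neg_mul]

lemma integrableOn_aux {c : ℝ} (hc : 0 < c) {w : ℝ → ℝ} (hw : Continuous w) {C : ℝ}
    (hC : ∀ t, 0 < t → |w t| ≤ C) :
    IntegrableOn (fun t : ℝ => t ^ ((1:ℝ)/2) * exp (-(c * t)) * w t) (Ioi 0) := by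
  have hg : IntegrableOn (fun t : ℝ => C * (t ^ ((1:ℝ)/2) * exp (-(c * t)))) (Ioi 0) :=
    (integrableOn_base hc).const_mul C
  refine hg.mono' ?_ ?_
  · refine ContinuousOn.aestronglyMeasurable ?_ measurableSet_Ioi
    exact ((continuousOn_id.rpow_const fun x hx => Or.inl (ne_of_gt hx)).mul
      ((continuous_exp.comp (continuous_const.mul continuous_id).neg).continuousOn)).mul
      hw.continuousOn
  · rw [ae_restrict_iff' measurableSet_Ioi]
    filter_upwards with t ht
    have h1 : (0:ℝ) ≤ t ^ ((1:ℝ)/2) := rpow_nonneg (le_of_lt ht) _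
    have h2 : (0:ℝ) < exp (-(c * t)) := exp_pos _
    rw [Real.norm_eq_abs, abs_mul, abs_mul, abs_of_nonneg h1, abs_of_pos h2]
    calc t ^ ((1:ℝ)/2) * exp (-(c * t)) * |w t| ≤ t ^ ((1:ℝ)/2) * exp (-(c * t)) * C := by
          exact mul_le_mul_of_nonneg_left (hC t ht) (by positivity)
      _ = C * (t ^ ((1:ℝ)/2) * exp (-(c * t))) := by ring

lemma integrableOn_aux' {c : ℝ} (hc : 0 < c) {w : ℝ → ℝ} (hw : Continuous w) {C : ℝ}
    (hC : ∀ t, 0 < t → |w t| ≤ C) :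
    IntegrableOn (fun t : ℝ => exp (-(c * t)) * w t) (Ioi 0) := by
  have hg : IntegrableOn (fun t : ℝ => C * exp (-c * t)) (Ioi 0) :=
    (exp_neg_integrableOn_Ioi 0 hc).const_mul C
  refine hg.mono' ?_ ?_
  · exact (((continuous_exp.comp (continuous_const.mul continuous_id).neg)).mul
      hw).aestronglyMeasurable
  · rw [ae_restrict_iff' measurableSet_Ioi]
    filter_upwards with t ht
    have h2 : (0:ℝ) < exp (-(c * t)) := exp_pos _
    rw [Real.norm_eq_abs, abs_mul, abs_of_pos h2, neg_mul]
    calc exp (-(c * t)) * |w t| ≤ exp (-(c * t)) * C :=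
          mul_le_mul_of_nonneg_left (hC t ht) (le_of_lt h2)
      _ = C * exp (-(c*t)) := by ring

lemma integral_base {c : ℝ} (hc : 0 < c) :
    ∫ t in Ioi 0, t ^ ((1:ℝ)/2) * exp (-(c * t)) = (1/c) ^ ((3:ℝ)/2) * Real.Gamma (3/2) := by
  have h := integral_rpow_mul_exp_neg_mul_Ioi (a := 3/2) (by norm_num) hc
  rw [show (3:ℝ)/2 - 1 = 1/2 by norm_num] at h
  exact h


lemma J_eq (n : ℕ) :
    ∫ t in Ioi 0, t ^ ((1:ℝ)/2) * exp (-(2*t)) * (1 - exp (-t))^n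
      = Real.Gamma (3/2) * ∑ l ∈ Finset.range (n+1),
          (-1:ℝ)^l * (n.choose l : ℝ) * (1/((l:ℝ)+2)) ^ ((3:ℝ)/2) := by
  have hpt : ∀ t : ℝ, t ^ ((1:ℝ)/2) * exp (-(2*t)) * (1 - exp (-t))^n
      = ∑ l ∈ Finset.range (n+1),
          (-1:ℝ)^l * (n.choose l : ℝ) * (t ^ ((1:ℝ)/2) * exp (-(((l:ℝ)+2) * t))) := by
    intro t
    rw [sub_eq_neg_add, add_pow, Finset.mul_sum]
    refine Finset.sum_congr rfl fun k hk => ?_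
    have h1 : (-exp (-t))^k = (-1:ℝ)^k * exp (-((k:ℝ)*t)) := by
      rw [neg_pow, ← Real.exp_nat_mul]
      congr 1
      ring_nf
    have he : exp (-(2*t)) * exp (-((k:ℝ)*t)) = exp (-(((k:ℝ)+2) * t)) := by
      rw [← exp_add]; congr 1; ring
    rw [h1, one_pow, ← he]
    ring_nf
  simp_rw [hpt]
  have hint : ∀ l ∈ Finset.range (n+1), Integrable
      (fun t : ℝ => (-1:ℝ)^l * (n.choose l : ℝ) * (t ^ ((1:ℝ)/2) * exp (-(((l:ℝ)+2) * t))))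
      (volume.restrict (Ioi 0)) :=
    fun l _ => (integrableOn_base (by positivity : (0:ℝ) < (l:ℝ)+2)).const_mul
      ((-1:ℝ)^l * (n.choose l : ℝ))
  rw [integral_finset_sum _ hint]
  rw [Finset.mul_sum]
  refine Finset.sum_congr rfl fun l hl => ?_
  rw [MeasureTheory.integral_const_mul, integral_base (by positivity : (0:ℝ) < (l:ℝ)+2)]
  ring


lemma wcont (n : ℕ) (a b : ℝ) : Continuous (fun t : ℝ => (1 - exp (-t))^n * (a * exp (-t) - b)) := by
  have he : Continuous (fun t : ℝ => exp (-t)) := continuous_exp.comp continuous_neg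
  exact ((continuous_const.sub he).pow n).mul ((continuous_const.mul he).sub continuous_const)

lemma wbound (n : ℕ) (a b : ℝ) (ha : 0 ≤ a) (hb : 0 ≤ b) :
    ∀ t : ℝ, 0 < t → |(1 - exp (-t))^n * (a * exp (-t) - b)| ≤ a + b := by
  intro t ht
  have h1 : exp (-t) ≤ 1 := exp_le_one_iff.mpr (by linarith)
  have h0 : 0 < exp (-t) := exp_pos _
  rw [abs_mul]
  have hu : |(1 - exp (-t))^n| ≤ 1 := by
    rw [abs_pow]
    refine pow_le_one₀ (abs_nonneg _) ?_
    rw [abs_le]; constructor <;> nlinarith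
  have hv : |a * exp (-t) - b| ≤ a + b := by
    rw [abs_le]; constructor <;> nlinarith
  calc |(1 - exp (-t))^n| * |a * exp (-t) - b| ≤ 1 * (a+b) := by
        exact mul_le_mul hu hv (abs_nonneg _) one_pos.le
    _ = a + b := one_mul _

lemma ftc_zero (n : ℕ) :
    ∫ t in Ioi 0, exp (-(2*t)) * ((1 - exp (-t))^n * (((n:ℝ)+3) * exp (-t) - 2)) = 0 := by
  have hderiv : ∀ x ∈ Ici (0:ℝ), HasDerivAt (fun t : ℝ => exp (-(2*t)) * (1 - exp (-t))^(n+1))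
      (exp (-(2*x)) * ((1 - exp (-x))^n * (((n:ℝ)+3) * exp (-x) - 2))) x := by
    intro x _
    have h1 : HasDerivAt (fun t : ℝ => exp (-(2*t))) (exp (-(2*x)) * (-2)) x := by
      have := ((hasDerivAt_id x).const_mul (-2:ℝ)).exp
      simpa [neg_mul, mul_comm] using this
    have h2 : HasDerivAt (fun t : ℝ => exp (-t)) (exp (-x) * (-1)) x :=
      (hasDerivAt_id x).neg.exp
    have h3 : HasDerivAt (fun t : ℝ => (1 - exp (-t))^(n+1))
        ((n+1 : ℕ) * (1 - exp (-x))^n * (exp (-x))) x := by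
      have := (h2.const_sub 1).pow (n+1)
      refine this.congr_deriv ?_
      simp only [Nat.add_sub_cancel]; push_cast; ring
    have := h1.mul h3
    refine this.congr_deriv ?_
    have hp : (1 - exp (-x))^(n+1) = (1 - exp (-x))^n * (1 - exp (-x)) := pow_succ _ _
    rw [hp]
    push_cast
    ring
  have hint : IntegrableOn
      (fun x : ℝ => exp (-(2*x)) * ((1 - exp (-x))^n * (((n:ℝ)+3) * exp (-x) - 2))) (Ioi 0) :=
    integrableOn_aux' (by norm_num : (0:ℝ) < 2) (wcont n _ 2)
      (wbound n _ 2 (by positivity) (by norm_num))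
  have htend : Tendsto (fun t : ℝ => exp (-(2*t)) * (1 - exp (-t))^(n+1)) atTop (𝓝 0) := by
    have h1 : Tendsto (fun t : ℝ => exp (-(2*t))) atTop (𝓝 0) := by
      have h0 : Tendsto (fun t : ℝ => 2*t) atTop atTop :=
        Tendsto.const_mul_atTop (by norm_num) tendsto_id
      exact tendsto_exp_neg_atTop_nhds_zero.comp h0
    have h2 : Tendsto (fun t : ℝ => (1 - exp (-t))^(n+1)) atTop (𝓝 1) := by
      have : Tendsto (fun t : ℝ => 1 - exp (-t)) atTop (𝓝 1) := by
        simpa using (tendsto_const_nhds.sub tendsto_exp_neg_atTop_nhds_zero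
          (f := fun _ : ℝ => (1:ℝ)))
      simpa using this.pow (n+1)
    simpa using h1.mul h2
  have h := integral_Ioi_of_hasDerivAt_of_tendsto' hderiv hint htend
  rw [h]
  norm_num


lemma pos_key (n : ℕ) :
    0 < ∫ t in Ioi 0, t ^ ((1:ℝ)/2) * (exp (-(2*t)) * ((1 - exp (-t))^n *
        (2 - ((n:ℝ)+3) * exp (-t)))) := by
  set a : ℝ := ((n:ℝ)+3)/2 with ha_def
  have ha : 1 < a := by rw [ha_def]; nlinarith [Nat.cast_nonneg (α := ℝ) n]
  have ha0 : 0 < a := lt_trans one_pos ha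
  set t₀ : ℝ := Real.log a with ht₀_def
  have ht₀ : 0 < t₀ := log_pos ha
  have hexp_t₀ : exp (-t₀) = 1/a := by rw [exp_neg, exp_log ha0, one_div]
  have hn3 : ((n:ℝ)+3) = 2*a := by rw [ha_def]; ring
  set k : ℝ → ℝ := fun t => exp (-(2*t)) * ((1 - exp (-t))^n * (2 - ((n:ℝ)+3) * exp (-t)))
    with hk_def
  -- integrability
  have hw1 : Continuous fun t : ℝ => (1 - exp (-t))^n * (((n:ℝ)+3) * exp (-t) - 2) :=
    wcont n _ 2
  have hb1 := wbound n ((n:ℝ)+3) 2 (by positivity) (by norm_num)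
  have hknegint : IntegrableOn (fun t : ℝ =>
      exp (-(2*t)) * ((1 - exp (-t))^n * (((n:ℝ)+3) * exp (-t) - 2))) (Ioi 0) :=
    integrableOn_aux' (by norm_num) hw1 hb1
  have hkint : IntegrableOn k (Ioi 0) := by
    have h2 : IntegrableOn (fun t : ℝ =>
        -(exp (-(2*t)) * ((1 - exp (-t))^n * (((n:ℝ)+3) * exp (-t) - 2)))) (Ioi 0) :=
      hknegint.neg
    refine h2.congr_fun (fun t _ => ?_) measurableSet_Ioi
    rw [hk_def]; ring
  have hskint : IntegrableOn (fun t : ℝ => t ^ ((1:ℝ)/2) * k t) (Ioi 0) := by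
    have h2 : IntegrableOn (fun t : ℝ =>
        -(t ^ ((1:ℝ)/2) * exp (-(2*t)) * ((1 - exp (-t))^n * (((n:ℝ)+3) * exp (-t) - 2))))
        (Ioi 0) := (integrableOn_aux (by norm_num : (0:ℝ) < 2) hw1 hb1).neg
    refine h2.congr_fun (fun t _ => ?_) measurableSet_Ioi
    rw [hk_def]; ring
  have hkzero : ∫ t in Ioi 0, k t = 0 := by
    have h := ftc_zero n
    have : ∫ t in Ioi 0, k t = - ∫ t in Ioi 0,
        exp (-(2*t)) * ((1 - exp (-t))^n * (((n:ℝ)+3) * exp (-t) - 2)) := by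
      rw [← integral_neg]
      refine setIntegral_congr_fun measurableSet_Ioi (fun t _ => ?_)
      rw [hk_def]; ring
    rw [this, h, neg_zero]
  -- the shifted integrand
  have hshiftint : IntegrableOn (fun t : ℝ => (t ^ ((1:ℝ)/2) - t₀ ^ ((1:ℝ)/2)) * k t) (Ioi 0) := by
    have h2 : IntegrableOn (fun t : ℝ => t ^ ((1:ℝ)/2) * k t - t₀ ^ ((1:ℝ)/2) * k t) (Ioi 0) :=
      hskint.sub (hkint.const_mul (t₀ ^ ((1:ℝ)/2)))
    refine h2.congr_fun (fun t _ => ?_) measurableSet_Ioi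
    ring
  have hpos : 0 < ∫ t in Ioi 0, (t ^ ((1:ℝ)/2) - t₀ ^ ((1:ℝ)/2)) * k t := by
    rw [setIntegral_pos_iff_support_of_nonneg_ae]
    · -- measure of support positive
      refine lt_of_lt_of_le ?_ (measure_mono (?_ : Ioi t₀ ⊆ _))
      · rw [Real.volume_Ioi]; exact ENNReal.zero_lt_top
      · intro t ht
        simp only [mem_Ioi] at ht
        have ht0 : 0 < t := lt_trans ht₀ ht
        constructor
        · simp only [Function.mem_support]
          have h1 : 0 < t ^ ((1:ℝ)/2) - t₀ ^ ((1:ℝ)/2) := by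
            have := Real.rpow_lt_rpow (le_of_lt ht₀) ht (by norm_num : (0:ℝ) < 1/2)
            linarith
          have h2 : 0 < 1 - exp (-t) := by
            have : exp (-t) < 1 := exp_lt_one_iff.mpr (by linarith)
            linarith
          have h3 : 0 < 2 - ((n:ℝ)+3) * exp (-t) := by
            have hm : exp (-t) < exp (-t₀) := exp_lt_exp.mpr (by linarith)
            rw [hexp_t₀] at hm
            rw [hn3]
            have : 2*a*exp (-t) < 2*a*(1/a) := by
              apply mul_lt_mul_of_pos_left hm
              positivity
            rw [mul_one_div, mul_div_assoc, div_self (ne_of_gt ha0)] at this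
            linarith
          have : 0 < (t ^ ((1:ℝ)/2) - t₀ ^ ((1:ℝ)/2)) * k t := by
            rw [hk_def]
            have := pow_pos h2 n
            positivity
          exact ne_of_gt this
        · exact mem_Ioi.mpr ht0
    · -- a.e. nonneg
      filter_upwards [self_mem_ae_restrict measurableSet_Ioi] with t ht
      simp only [mem_Ioi] at ht
      simp only [Pi.zero_apply]
      have hu : (0:ℝ) ≤ (1 - exp (-t))^n := by
        have : exp (-t) ≤ 1 := exp_le_one_iff.mpr (by linarith)
        have : (0:ℝ) ≤ 1 - exp (-t) := by linarith
        positivity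
      have he2 : (0:ℝ) < exp (-(2*t)) := exp_pos _
      rcases le_total t t₀ with hle | hle
      · have h1 : t ^ ((1:ℝ)/2) - t₀ ^ ((1:ℝ)/2) ≤ 0 := by
          have := Real.rpow_le_rpow (le_of_lt ht) hle (by norm_num : (0:ℝ) ≤ 1/2)
          linarith
        have h3 : 2 - ((n:ℝ)+3) * exp (-t) ≤ 0 := by
          have hm : exp (-t₀) ≤ exp (-t) := exp_le_exp.mpr (by linarith)
          rw [hexp_t₀] at hm
          rw [hn3]
          have : 2*a*(1/a) ≤ 2*a*exp (-t) := by
            apply mul_le_mul_of_nonneg_left hm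
            positivity
          rw [mul_one_div, mul_div_assoc, div_self (ne_of_gt ha0)] at this
          linarith
        have hk_le : k t ≤ 0 := by
          rw [hk_def]
          have h4 : (1 - exp (-t))^n * (2 - ((n:ℝ)+3) * exp (-t)) ≤ 0 :=
            mul_nonpos_of_nonneg_of_nonpos hu h3
          exact mul_nonpos_of_nonneg_of_nonpos he2.le h4
        nlinarith [mul_nonneg (neg_nonneg.mpr h1) (neg_nonneg.mpr hk_le)]
      · have h1 : 0 ≤ t ^ ((1:ℝ)/2) - t₀ ^ ((1:ℝ)/2) := by
          have := Real.rpow_le_rpow (le_of_lt ht₀) hle (by norm_num : (0:ℝ) ≤ 1/2)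
          linarith
        have h3 : 0 ≤ 2 - ((n:ℝ)+3) * exp (-t) := by
          have hm : exp (-t) ≤ exp (-t₀) := exp_le_exp.mpr (by linarith)
          rw [hexp_t₀] at hm
          rw [hn3]
          have : 2*a*exp (-t) ≤ 2*a*(1/a) := by
            apply mul_le_mul_of_nonneg_left hm
            positivity
          rw [mul_one_div, mul_div_assoc, div_self (ne_of_gt ha0)] at this
          linarith
        have hk_ge : 0 ≤ k t := by
          rw [hk_def]
          positivity
        exact mul_nonneg h1 hk_ge
    · exact hshiftint
  -- conclude
  have hsplit : ∫ t in Ioi 0, t ^ ((1:ℝ)/2) * k t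
      = (∫ t in Ioi 0, (t ^ ((1:ℝ)/2) - t₀ ^ ((1:ℝ)/2)) * k t)
        + t₀ ^ ((1:ℝ)/2) * ∫ t in Ioi 0, k t := by
    rw [← MeasureTheory.integral_const_mul, ← integral_add hshiftint
      (hkint.const_mul (t₀ ^ ((1:ℝ)/2)))]
    refine setIntegral_congr_fun measurableSet_Ioi (fun t _ => ?_)
    ring
  calc (0:ℝ) < ∫ t in Ioi 0, (t ^ ((1:ℝ)/2) - t₀ ^ ((1:ℝ)/2)) * k t := hpos
    _ = ∫ t in Ioi 0, t ^ ((1:ℝ)/2) * k t := by rw [hsplit, hkzero]; ring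
    _ = _ := rfl


lemma integrableOn_A (m : ℕ) :
    IntegrableOn (fun t : ℝ => t ^ ((1:ℝ)/2) * exp (-(2*t)) * (1 - exp (-t))^m) (Ioi 0) := by
  refine integrableOn_aux (by norm_num) ?_ (C := 1) ?_
  · exact (continuous_const.sub (continuous_exp.comp continuous_neg)).pow m
  · intro t ht
    have h1 : exp (-t) ≤ 1 := exp_le_one_iff.mpr (by linarith)
    have h0 : 0 < exp (-t) := exp_pos _
    rw [abs_pow]
    refine pow_le_one₀ (abs_nonneg _) ?_
    rw [abs_le]; constructor <;> linarith

lemma main_ineq (n : ℕ) :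
    ((n:ℝ)+1) * ∑ l ∈ Finset.range (n+1),
          (-1:ℝ)^l * (n.choose l : ℝ) * (1/((l:ℝ)+2)) ^ ((3:ℝ)/2)
      < ((n:ℝ)+3) * ∑ l ∈ Finset.range (n+2),
          (-1:ℝ)^l * ((n+1).choose l : ℝ) * (1/((l:ℝ)+2)) ^ ((3:ℝ)/2) := by
  have hpos := pos_key n
  have hcomb : (∫ t in Ioi 0, t ^ ((1:ℝ)/2) * (exp (-(2*t)) * ((1 - exp (-t))^n *
        (2 - ((n:ℝ)+3) * exp (-t)))))
      = ((n:ℝ)+3) * (∫ t in Ioi 0, t ^ ((1:ℝ)/2) * exp (-(2*t)) * (1 - exp (-t))^(n+1))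
        - ((n:ℝ)+1) * (∫ t in Ioi 0, t ^ ((1:ℝ)/2) * exp (-(2*t)) * (1 - exp (-t))^n) := by
    rw [← MeasureTheory.integral_const_mul, ← MeasureTheory.integral_const_mul,
      ← integral_sub ((integrableOn_A (n+1)).const_mul _) ((integrableOn_A n).const_mul _)]
    refine setIntegral_congr_fun measurableSet_Ioi (fun t _ => ?_)
    rw [pow_succ]
    ring
  rw [hcomb, J_eq n, J_eq (n+1)] at hpos
  have hΓ : 0 < Real.Gamma (3/2) := Real.Gamma_pos_of_pos (by norm_num)
  nlinarith [hpos, hΓ]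

end OrAux

/-- The relay switching rate of `L`-relay opportunistic relaying over i.i.d. Rayleigh
fading, `√2 π 𝓕 · g(L)`, is a strictly increasing function of the number of relays `L`:
`g(L+1) > g(L)` for every `L ≥ 2`. -/
theorem orSwitchingSum_strictMono :
    ∀ L : ℕ, 2 ≤ L →
      orSwitchingSum L < orSwitchingSum (L + 1) ∧
        ∀ F : ℝ, 0 < F →
          Real.sqrt 2 * π * F * orSwitchingSum L <
            Real.sqrt 2 * π * F * orSwitchingSum (L + 1) := by
  intro L hL
  obtain ⟨n, rfl⟩ : ∃ n, L = n + 2 := ⟨L - 2, by omega⟩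
  have key := main_ineq n
  have hmain : orSwitchingSum (n+2) < orSwitchingSum (n+2+1) := by
    unfold orSwitchingSum
    have e1 : n + 2 - 1 = n + 1 := by omega
    have e2 : n + 2 - 2 = n := by omega
    have e3 : n + 2 + 1 - 1 = n + 2 := by omega
    have e4 : n + 2 + 1 - 2 = n + 1 := by omega
    rw [e1, e2, e3, e4]
    push_cast
    nlinarith [key, Nat.cast_nonneg (α := ℝ) n]
  refine ⟨hmain, fun F hF => ?_⟩
  have h2 : 0 < Real.sqrt 2 * π * F := by positivity
  exact mul_lt_mul_of_pos_left hmain h2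
end

section
/- Let Ω_{SR}, Ω_{RD}, 𝓕_{SR}, 𝓕_{RD}, T, Γ > 0. Let f_a(x) = 2x·((Ω_{SR}+Ω_{RD})/(Ω_{SR}Ω_{RD}))·exp(−x²(Ω_{SR}+Ω_{RD})/(Ω_{SR}Ω_{RD})) and let g(x) = (1/(√2·π^{3/2}(Ω_{SR}+Ω_{RD})))·[ Ω_{RD}·exp(−x²/(2π²𝓕_{SR}²Ω_{SR}))/(√(Ω_{SR})𝓕_{SR}) + Ω_{SR}·exp(−x²/(2π²𝓕_{RD}²Ω_{RD}))/(√(Ω_{RD})𝓕_{RD}) ]. Then ∫_{−∞}^{0} |x| · f_a(√(T/Γ)) · g(x) dx = √(2π)·( √(T/(ΓΩ_{SR}))·𝓕_{SR} + √(T/(ΓΩ_{RD}))·𝓕_{RD} )·exp( −((Ω_{SR}+Ω_{RD})/(Ω_{SR}Ω_{RD}))·(T/Γ) ). -/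
open MeasureTheory Real

private lemma gauss_Ioi (b : ℝ) (hb : 0 < b) :
    ∫ x in Set.Ioi (0 : ℝ), x * Real.exp (-b * x ^ 2) = (2 * b)⁻¹ := by
  have hderiv : ∀ x ∈ Set.Ici (0 : ℝ),
      HasDerivAt (fun x : ℝ => -(2 * b)⁻¹ * Real.exp (-b * x ^ 2))
        (x * Real.exp (-b * x ^ 2)) x := by
    intro x _
    have h1 : HasDerivAt (fun x : ℝ => -b * x ^ 2) (-b * (2 * x)) x := by
      simpa using (hasDerivAt_pow 2 x).const_mul (-b)
    have h2 := h1.exp.const_mul (-(2 * b)⁻¹)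
    refine h2.congr_deriv ?_
    have hb0 : b * b⁻¹ = 1 := mul_inv_cancel₀ hb.ne'
    linear_combination (x * Real.exp (-b * x ^ 2)) * hb0
  have hint : IntegrableOn (fun x : ℝ => x * Real.exp (-b * x ^ 2)) (Set.Ioi 0) :=
    (integrable_mul_exp_neg_mul_sq hb).integrableOn
  have htend : Filter.Tendsto (fun x : ℝ => -(2 * b)⁻¹ * Real.exp (-b * x ^ 2))
      Filter.atTop (nhds 0) := by
    have h1 : Filter.Tendsto (fun x : ℝ => -b * x ^ 2) Filter.atTop Filter.atBot := by
      have := (Filter.tendsto_pow_atTop (n := 2) (by norm_num)).const_mul_atTop hb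
      have h2 : Filter.Tendsto (fun x : ℝ => -(b * x ^ 2)) Filter.atTop Filter.atBot :=
        Filter.tendsto_neg_atTop_atBot.comp this
      simpa [neg_mul] using h2
    have h3 : Filter.Tendsto (fun x : ℝ => Real.exp (-b * x ^ 2)) Filter.atTop (nhds 0) :=
      Real.tendsto_exp_atBot.comp h1
    simpa using h3.const_mul (-(2 * b)⁻¹)
  have h := integral_Ioi_of_hasDerivAt_of_tendsto' hderiv hint htend
  rw [h]
  simp

private lemma gauss_Iio (b : ℝ) (hb : 0 < b) :
    ∫ x in Set.Iio (0 : ℝ), |x| * Real.exp (-b * x ^ 2) = (2 * b)⁻¹ := by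
  rw [← integral_Iic_eq_integral_Iio]
  have h2 := integral_comp_neg_Iic (0 : ℝ)
    (fun y : ℝ => |y| * Real.exp (-b * y ^ 2))
  simp only [abs_neg, neg_sq, neg_zero] at h2
  rw [h2]
  rw [show ∫ x in Set.Ioi (0 : ℝ), |x| * Real.exp (-b * x ^ 2)
      = ∫ x in Set.Ioi (0 : ℝ), x * Real.exp (-b * x ^ 2) from
    setIntegral_congr_fun measurableSet_Ioi fun x hx => by
      rw [abs_of_pos (by exact hx)]]
  exact gauss_Ioi b hb

/-- Equation (26) of the paper: the level down-crossing rate of the min-equivalent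
virtual channel gain `a(t)` of a relay branch at the threshold level `√(T/Γ)`;
`fa` is the Rayleigh density of `a(t)` and `g` the Gaussian-mixture density of its
time derivative. -/
theorem dssc_downcrossing_rate
    (ΩSR ΩRD FSR FRD T Γ : ℝ)
    (hΩSR : 0 < ΩSR) (hΩRD : 0 < ΩRD) (hFSR : 0 < FSR) (hFRD : 0 < FRD)
    (hT : 0 < T) (hΓ : 0 < Γ)
    (fa g : ℝ → ℝ)
    (hfa : fa = fun x => 2 * x * ((ΩSR + ΩRD) / (ΩSR * ΩRD)) *
      Real.exp (-x ^ 2 * (ΩSR + ΩRD) / (ΩSR * ΩRD)))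
    (hg : g = fun x =>
      (1 / (Real.sqrt 2 * π ^ ((3 : ℝ) / 2) * (ΩSR + ΩRD))) *
        (ΩRD * Real.exp (-x ^ 2 / (2 * π ^ 2 * FSR ^ 2 * ΩSR)) /
            (Real.sqrt ΩSR * FSR) +
          ΩSR * Real.exp (-x ^ 2 / (2 * π ^ 2 * FRD ^ 2 * ΩRD)) /
            (Real.sqrt ΩRD * FRD))) :
    ∫ x in Set.Iio (0 : ℝ), |x| * fa (Real.sqrt (T / Γ)) * g x =
      Real.sqrt (2 * π) *
        (Real.sqrt (T / (Γ * ΩSR)) * FSR + Real.sqrt (T / (Γ * ΩRD)) * FRD) *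
        Real.exp (-((ΩSR + ΩRD) / (ΩSR * ΩRD)) * (T / Γ)) := by
  subst hfa hg
  -- abbreviations
  set D1 : ℝ := 2 * π ^ 2 * FSR ^ 2 * ΩSR with hD1
  set D2 : ℝ := 2 * π ^ 2 * FRD ^ 2 * ΩRD with hD2
  have hπ : (0 : ℝ) < π := Real.pi_pos
  have hD1pos : 0 < D1 := by positivity
  have hD2pos : 0 < D2 := by positivity
  set C : ℝ := 2 * Real.sqrt (T / Γ) * ((ΩSR + ΩRD) / (ΩSR * ΩRD)) *
      Real.exp (-(Real.sqrt (T / Γ)) ^ 2 * (ΩSR + ΩRD) / (ΩSR * ΩRD)) with hC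
  set k : ℝ := 1 / (Real.sqrt 2 * π ^ ((3 : ℝ) / 2) * (ΩSR + ΩRD)) with hk
  set c1 : ℝ := C * k * (ΩRD / (Real.sqrt ΩSR * FSR)) with hc1
  set c2 : ℝ := C * k * (ΩSR / (Real.sqrt ΩRD * FRD)) with hc2
  have hb1 : (0 : ℝ) < D1⁻¹ := inv_pos.mpr hD1pos
  have hb2 : (0 : ℝ) < D2⁻¹ := inv_pos.mpr hD2pos
  have hexp1 : ∀ x : ℝ, Real.exp (-x ^ 2 / D1) = Real.exp (-D1⁻¹ * x ^ 2) := by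
    intro x; congr 1; field_simp
  have hexp2 : ∀ x : ℝ, Real.exp (-x ^ 2 / D2) = Real.exp (-D2⁻¹ * x ^ 2) := by
    intro x; congr 1; field_simp
  have hsplit : ∀ x : ℝ,
      |x| * C * (k * (ΩRD * Real.exp (-x ^ 2 / D1) / (Real.sqrt ΩSR * FSR) +
          ΩSR * Real.exp (-x ^ 2 / D2) / (Real.sqrt ΩRD * FRD)))
      = c1 * (|x| * Real.exp (-D1⁻¹ * x ^ 2)) + c2 * (|x| * Real.exp (-D2⁻¹ * x ^ 2)) := by
    intro x
    rw [← hexp1, ← hexp2, hc1, hc2]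
    ring
  have hI : ∫ x in Set.Iio (0 : ℝ),
      |x| * C * (k * (ΩRD * Real.exp (-x ^ 2 / D1) / (Real.sqrt ΩSR * FSR) +
          ΩSR * Real.exp (-x ^ 2 / D2) / (Real.sqrt ΩRD * FRD)))
      = c1 * (2 * D1⁻¹)⁻¹ + c2 * (2 * D2⁻¹)⁻¹ := by
    rw [show (fun x : ℝ => |x| * C * (k * (ΩRD * Real.exp (-x ^ 2 / D1) / (Real.sqrt ΩSR * FSR) +
          ΩSR * Real.exp (-x ^ 2 / D2) / (Real.sqrt ΩRD * FRD))))
        = fun x : ℝ => c1 * (|x| * Real.exp (-D1⁻¹ * x ^ 2)) +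
            c2 * (|x| * Real.exp (-D2⁻¹ * x ^ 2)) from funext hsplit]
    have hint1 : Integrable (fun x : ℝ => |x| * Real.exp (-D1⁻¹ * x ^ 2)) :=
      (integrable_mul_exp_neg_mul_sq hb1).abs.congr (Filter.Eventually.of_forall fun x => by
        simp [abs_mul, Real.abs_exp])
    have hint2 : Integrable (fun x : ℝ => |x| * Real.exp (-D2⁻¹ * x ^ 2)) :=
      (integrable_mul_exp_neg_mul_sq hb2).abs.congr (Filter.Eventually.of_forall fun x => by
        simp [abs_mul, Real.abs_exp])
    rw [integral_add ((hint1.const_mul c1).integrableOn) ((hint2.const_mul c2).integrableOn),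
      integral_const_mul, integral_const_mul, gauss_Iio _ hb1, gauss_Iio _ hb2]
  simp only [← hC, hI]
  -- now pure algebra
  have hTΓ : (0 : ℝ) < T / Γ := div_pos hT hΓ
  have hs : Real.sqrt (T / Γ) ^ 2 = T / Γ := Real.sq_sqrt hTΓ.le
  have hsqrt1 : Real.sqrt (T / (Γ * ΩSR)) = Real.sqrt (T / Γ) / Real.sqrt ΩSR := by
    rw [show T / (Γ * ΩSR) = (T / Γ) / ΩSR by rw [div_div], Real.sqrt_div hTΓ.le]
  have hsqrt2 : Real.sqrt (T / (Γ * ΩRD)) = Real.sqrt (T / Γ) / Real.sqrt ΩRD := by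
    rw [show T / (Γ * ΩRD) = (T / Γ) / ΩRD by rw [div_div], Real.sqrt_div hTΓ.le]
  have hsqrt2π : Real.sqrt (2 * π) = Real.sqrt 2 * Real.sqrt π :=
    Real.sqrt_mul (by norm_num) π
  have hπ32 : π ^ ((3 : ℝ) / 2) = π * Real.sqrt π := by
    rw [show (3 : ℝ) / 2 = 1 + 1 / 2 by norm_num, Real.rpow_add hπ, Real.rpow_one,
      ← Real.sqrt_eq_rpow]
  have hEexp : Real.exp (-(Real.sqrt (T / Γ)) ^ 2 * (ΩSR + ΩRD) / (ΩSR * ΩRD))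
      = Real.exp (-((ΩSR + ΩRD) / (ΩSR * ΩRD)) * (T / Γ)) := by
    rw [hs]; ring_nf
  set s : ℝ := Real.sqrt (T / Γ) with hsdef
  set pS : ℝ := Real.sqrt ΩSR with hpS
  set pR : ℝ := Real.sqrt ΩRD with hpR
  set sp : ℝ := Real.sqrt π with hsp
  set s2 : ℝ := Real.sqrt 2 with hs2
  have hpS2 : pS ^ 2 = ΩSR := Real.sq_sqrt hΩSR.le
  have hpR2 : pR ^ 2 = ΩRD := Real.sq_sqrt hΩRD.le
  have hsp2 : sp ^ 2 = π := Real.sq_sqrt hπ.le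
  have hs22 : s2 ^ 2 = 2 := Real.sq_sqrt (by norm_num)
  have hpSpos : 0 < pS := Real.sqrt_pos.mpr hΩSR
  have hpRpos : 0 < pR := Real.sqrt_pos.mpr hΩRD
  have hsppos : 0 < sp := Real.sqrt_pos.mpr hπ
  have hs2pos : 0 < s2 := Real.sqrt_pos.mpr (by norm_num)
  rw [hsqrt1, hsqrt2, hsqrt2π, hc1, hc2, hC, hk, hπ32, hEexp]
  rw [hD1, hD2]
  rw [← hpS2, ← hpR2, ← hsp2, ← hs22]
  have hΩsum : ΩSR + ΩRD ≠ 0 := by positivity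
  rw [← hpS2, ← hpR2] at hΩsum
  field_simp
end

section
/- For all q₁, q₂ ∈ (0,1), define ρ₁ = q₂(q₂−1)[1 − q₁ + q₁²] / ( q₁(q₁−1)[1 − 2q₂ + 2q₂²] + q₂(q₂−1) ) and ρ₂ = q₁(q₁−1)[1 − q₂ + q₂²] / ( q₂(q₂−1)[1 − 2q₁ + 2q₁²] + q₁(q₁−1) ). Then both denominators are equal and nonzero, ρ₁, ρ₂ ∈ (0,1), and ρ₁ + ρ₂ = 1. -/
/-- The steady-state relay activation probabilities of the DSSC-B protocol
(eqs. (27)–(28) of the paper): for `q₁, q₂ ∈ (0,1)`, the two denominators agree and are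
nonzero, `ρ₁, ρ₂ ∈ (0,1)`, and `ρ₁ + ρ₂ = 1`. -/
theorem dssc_steady_state_probabilities
    (q₁ q₂ : ℝ) (hq₁ : q₁ ∈ Set.Ioo (0 : ℝ) 1) (hq₂ : q₂ ∈ Set.Ioo (0 : ℝ) 1)
    (d₁ d₂ ρ₁ ρ₂ : ℝ)
    (hd₁ : d₁ = q₁ * (q₁ - 1) * (1 - 2 * q₂ + 2 * q₂ ^ 2) + q₂ * (q₂ - 1))
    (hd₂ : d₂ = q₂ * (q₂ - 1) * (1 - 2 * q₁ + 2 * q₁ ^ 2) + q₁ * (q₁ - 1))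
    (hρ₁ : ρ₁ = q₂ * (q₂ - 1) * (1 - q₁ + q₁ ^ 2) / d₁)
    (hρ₂ : ρ₂ = q₁ * (q₁ - 1) * (1 - q₂ + q₂ ^ 2) / d₂) :
    d₁ = d₂ ∧ d₁ ≠ 0 ∧ ρ₁ ∈ Set.Ioo (0 : ℝ) 1 ∧ ρ₂ ∈ Set.Ioo (0 : ℝ) 1 ∧ ρ₁ + ρ₂ = 1 := by
  obtain ⟨h1, h2⟩ := hq₁
  obtain ⟨h3, h4⟩ := hq₂
  have ha : q₁ * (q₁ - 1) < 0 := mul_neg_of_pos_of_neg h1 (by linarith)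
  have hb : q₂ * (q₂ - 1) < 0 := mul_neg_of_pos_of_neg h3 (by linarith)
  have ha' : -(1/4 : ℝ) ≤ q₁ * (q₁ - 1) := by nlinarith [sq_nonneg (q₁ - 1/2)]
  have hb' : -(1/4 : ℝ) ≤ q₂ * (q₂ - 1) := by nlinarith [sq_nonneg (q₂ - 1/2)]
  have hdeq : d₁ = d₂ := by rw [hd₁, hd₂]; ring
  have hd1neg : d₁ < 0 := by nlinarith
  have hd1 : d₁ ≠ 0 := ne_of_lt hd1neg
  have hd2 : d₂ ≠ 0 := hdeq ▸ hd1
  have hn1 : q₂ * (q₂ - 1) * (1 - q₁ + q₁ ^ 2) < 0 := by nlinarith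
  have hn2 : q₁ * (q₁ - 1) * (1 - q₂ + q₂ ^ 2) < 0 := by nlinarith
  have k1 : ρ₁ * d₁ = q₂ * (q₂ - 1) * (1 - q₁ + q₁ ^ 2) := by
    rw [hρ₁]; field_simp
  have k2 : ρ₂ * d₁ = q₁ * (q₁ - 1) * (1 - q₂ + q₂ ^ 2) := by
    rw [hρ₂, hdeq]; field_simp
  have hρ1pos : 0 < ρ₁ := by
    by_contra h
    push_neg at h
    have := mul_nonneg_of_nonpos_of_nonpos h hd1neg.le
    linarith [k1 ▸ this]
  have hρ2pos : 0 < ρ₂ := by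
    by_contra h
    push_neg at h
    have := mul_nonneg_of_nonpos_of_nonpos h hd1neg.le
    linarith [k2 ▸ this]
  have hgap1 : d₁ < q₂ * (q₂ - 1) * (1 - q₁ + q₁ ^ 2) := by nlinarith
  have hgap2 : d₁ < q₁ * (q₁ - 1) * (1 - q₂ + q₂ ^ 2) := by nlinarith
  have hρ1lt : ρ₁ < 1 := by
    by_contra h
    push_neg at h
    have : ρ₁ * d₁ ≤ 1 * d₁ := mul_le_mul_of_nonpos_right h (le_of_lt hd1neg)
    rw [k1, one_mul] at this
    linarith
  have hρ2lt : ρ₂ < 1 := by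
    by_contra h
    push_neg at h
    have : ρ₂ * d₁ ≤ 1 * d₁ := mul_le_mul_of_nonpos_right h (le_of_lt hd1neg)
    rw [k2, one_mul] at this
    linarith
  have hsum : ρ₁ + ρ₂ = 1 := by
    have : (ρ₁ + ρ₂) * d₁ = 1 * d₁ := by rw [add_mul, k1, k2, hd₁]; ring
    exact mul_right_cancel₀ hd1 this
  exact ⟨hdeq, hd1, ⟨hρ1pos, hρ1lt⟩, ⟨hρ2pos, hρ2lt⟩, hsum⟩
end

section
/- Let Ω_{SR₁}, Ω_{R₁D}, Ω_{SR₂}, Ω_{R₂D}, 𝓕_{SR₁}, 𝓕_{R₁D}, 𝓕_{SR₂}, 𝓕_{R₂D}, T, Γ > 0. Set Ωᵢ = Ω_{SRᵢ}Ω_{RᵢD}/(Ω_{SRᵢ}+Ω_{RᵢD}) and qᵢ = 1 − exp(−T/(ΓΩᵢ)) for i ∈ {1,2}; define Nᵢ(T) = √(2π)·( √(T/(ΓΩ_{SRᵢ}))·𝓕_{SRᵢ} + √(T/(ΓΩ_{RᵢD}))·𝓕_{RᵢD} )·exp(−T/(ΓΩᵢ)); define ρ₁ = q₂(q₂−1)[1−q₁+q₁²]/(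 q₁(q₁−1)[1−2q₂+2q₂²] + q₂(q₂−1) ) and ρ₂ = q₁(q₁−1)[1−q₂+q₂²]/( q₂(q₂−1)[1−2q₁+2q₁²] + q₁(q₁−1) ). Then ρ₁·N₁(T) + ρ₂·N₂(T) = [ √(2π)·e^{−T(Ω₁+Ω₂)/(ΓΩ₁Ω₂)}·(e^{2T/(ΓΩ₂)} − e^{T/(ΓΩ₂)})·(√(T/(ΓΩ_{SR₁}))𝓕_{SR₁} + √(T/(ΓΩ_{R₁D}))𝓕_{R₁D}) + √(2π)·e^{−T(Ω₁+Ω₂)/(ΓΩ₁Ω₂)}·(e^{2T/(ΓΩ₁)} − e^{T/(ΓΩ₁)})·(√(T/(ΓΩ_{SR₂}))𝓕_{SR₂} + √(T/(ΓΩ_{R₂D}))𝓕_{R₂D}) + √(2π)·(√(T/(ΓΩ_{SR₁}))𝓕_{SR₁} + √(T/(ΓΩ_{R₁D}))𝓕_{R₁D} + √(T/(ΓΩ_{SR₂}))𝓕_{SR₂} + √(T/(ΓΩ_{R₂D}))𝓕_{R₂D})·(e^{T/(ΓΩ₁)} − 1)(e^{T/(ΓΩ₂)} − 1) ] / [ 2e^{T/(ΓΩ₁)}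 − e^{2T/(ΓΩ₁)} + 2e^{T/(ΓΩ₂)} − e^{2T/(ΓΩ₂)} − 2e^{T(Ω₁+Ω₂)/(ΓΩ₁Ω₂)} + e^{T(Ω₁+2Ω₂)/(ΓΩ₁Ω₂)} + e^{T(2Ω₁+Ω₂)/(ΓΩ₁Ω₂)} − 2 ]. -/
open Real

set_option maxHeartbeats 4000000 in
/-- Theorem 3 of the paper (eq. (23)): the relay switching rate of the two-relay DSSC-B
protocol over i.n.i.d. Rayleigh fading, `SR_DSSC(T) = ρ₁ N₁(T) + ρ₂ N₂(T)`, in closed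
form. Here `Ωᵢ` is the mean-square min-equivalent virtual gain of branch `i`,
`qᵢ = 1 − exp(−T/(ΓΩᵢ))`, `Nᵢ(T)` is the down-crossing rate of branch `i` at the
threshold, and `ρᵢ` the steady-state probability that relay `Rᵢ` is active. -/
theorem relay_switching_rate_DSSC
    (ΩSR₁ ΩR₁D ΩSR₂ ΩR₂D FSR₁ FR₁D FSR₂ FR₂D T Γ : ℝ)
    (hΩSR₁ : 0 < ΩSR₁) (hΩR₁D : 0 < ΩR₁D) (hΩSR₂ : 0 < ΩSR₂) (hΩR₂D : 0 < ΩR₂D)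
    (hFSR₁ : 0 < FSR₁) (hFR₁D : 0 < FR₁D) (hFSR₂ : 0 < FSR₂) (hFR₂D : 0 < FR₂D)
    (hT : 0 < T) (hΓ : 0 < Γ)
    (Ω₁ Ω₂ q₁ q₂ N₁ N₂ ρ₁ ρ₂ : ℝ)
    (hΩ₁ : Ω₁ = ΩSR₁ * ΩR₁D / (ΩSR₁ + ΩR₁D))
    (hΩ₂ : Ω₂ = ΩSR₂ * ΩR₂D / (ΩSR₂ + ΩR₂D))
    (hq₁ : q₁ = 1 - Real.exp (-T / (Γ * Ω₁)))
    (hq₂ : q₂ = 1 - Real.exp (-T / (Γ * Ω₂)))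
    (hN₁ : N₁ = Real.sqrt (2 * π) *
      (Real.sqrt (T / (Γ * ΩSR₁)) * FSR₁ + Real.sqrt (T / (Γ * ΩR₁D)) * FR₁D) *
      Real.exp (-T / (Γ * Ω₁)))
    (hN₂ : N₂ = Real.sqrt (2 * π) *
      (Real.sqrt (T / (Γ * ΩSR₂)) * FSR₂ + Real.sqrt (T / (Γ * ΩR₂D)) * FR₂D) *
      Real.exp (-T / (Γ * Ω₂)))
    (hρ₁ : ρ₁ = q₂ * (q₂ - 1) * (1 - q₁ + q₁ ^ 2) /
      (q₁ * (q₁ - 1) * (1 - 2 * q₂ + 2 * q₂ ^ 2) + q₂ * (q₂ - 1)))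
    (hρ₂ : ρ₂ = q₁ * (q₁ - 1) * (1 - q₂ + q₂ ^ 2) /
      (q₂ * (q₂ - 1) * (1 - 2 * q₁ + 2 * q₁ ^ 2) + q₁ * (q₁ - 1))) :
    ρ₁ * N₁ + ρ₂ * N₂ =
      (Real.sqrt (2 * π) * Real.exp (-(T * (Ω₁ + Ω₂)) / (Γ * Ω₁ * Ω₂)) *
          (Real.exp (2 * T / (Γ * Ω₂)) - Real.exp (T / (Γ * Ω₂))) *
          (Real.sqrt (T / (Γ * ΩSR₁)) * FSR₁ + Real.sqrt (T / (Γ * ΩR₁D)) * FR₁D) +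
        Real.sqrt (2 * π) * Real.exp (-(T * (Ω₁ + Ω₂)) / (Γ * Ω₁ * Ω₂)) *
          (Real.exp (2 * T / (Γ * Ω₁)) - Real.exp (T / (Γ * Ω₁))) *
          (Real.sqrt (T / (Γ * ΩSR₂)) * FSR₂ + Real.sqrt (T / (Γ * ΩR₂D)) * FR₂D) +
        Real.sqrt (2 * π) *
          (Real.sqrt (T / (Γ * ΩSR₁)) * FSR₁ + Real.sqrt (T / (Γ * ΩR₁D)) * FR₁D +
            Real.sqrt (T / (Γ * ΩSR₂)) * FSR₂ + Real.sqrt (T / (Γ * ΩR₂D)) * FR₂D) *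
          (Real.exp (T / (Γ * Ω₁)) - 1) * (Real.exp (T / (Γ * Ω₂)) - 1)) /
      (2 * Real.exp (T / (Γ * Ω₁)) - Real.exp (2 * T / (Γ * Ω₁)) +
        2 * Real.exp (T / (Γ * Ω₂)) - Real.exp (2 * T / (Γ * Ω₂)) -
        2 * Real.exp (T * (Ω₁ + Ω₂) / (Γ * Ω₁ * Ω₂)) +
        Real.exp (T * (Ω₁ + 2 * Ω₂) / (Γ * Ω₁ * Ω₂)) +
        Real.exp (T * (2 * Ω₁ + Ω₂) / (Γ * Ω₁ * Ω₂)) - 2) := by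
  subst hρ₁ hρ₂ hq₁ hq₂ hN₁ hN₂
  have hΩ₁p : 0 < Ω₁ := by rw [hΩ₁]; positivity
  have hΩ₂p : 0 < Ω₂ := by rw [hΩ₂]; positivity
  have hΩ₁n : Ω₁ ≠ 0 := ne_of_gt hΩ₁p
  have hΩ₂n : Ω₂ ≠ 0 := ne_of_gt hΩ₂p
  have hΓn : Γ ≠ 0 := ne_of_gt hΓ
  have hxp : 0 < T / (Γ * Ω₁) := by positivity
  have hyp : 0 < T / (Γ * Ω₂) := by positivity
  have h1 : -T / (Γ * Ω₁) = -(T / (Γ * Ω₁)) := by ring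
  have h2 : -T / (Γ * Ω₂) = -(T / (Γ * Ω₂)) := by ring
  have h3 : 2 * T / (Γ * Ω₁) = T / (Γ * Ω₁) + T / (Γ * Ω₁) := by ring
  have h4 : 2 * T / (Γ * Ω₂) = T / (Γ * Ω₂) + T / (Γ * Ω₂) := by ring
  have h5 : -(T * (Ω₁ + Ω₂)) / (Γ * Ω₁ * Ω₂) = -(T / (Γ * Ω₁)) + -(T / (Γ * Ω₂)) := by
    field_simp; ring
  have h6 : T * (Ω₁ + Ω₂) / (Γ * Ω₁ * Ω₂) = T / (Γ * Ω₁) + T / (Γ * Ω₂) := by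
    field_simp; ring
  have h7 : T * (Ω₁ + 2 * Ω₂) / (Γ * Ω₁ * Ω₂) = T / (Γ * Ω₁) + T / (Γ * Ω₁) + T / (Γ * Ω₂) := by
    field_simp; ring
  have h8 : T * (2 * Ω₁ + Ω₂) / (Γ * Ω₁ * Ω₂) = T / (Γ * Ω₁) + T / (Γ * Ω₂) + T / (Γ * Ω₂) := by
    field_simp; ring
  rw [h1, h2, h3, h4, h5, h6, h7, h8]
  simp only [Real.exp_add, Real.exp_neg]
  set u : ℝ := Real.exp (T / (Γ * Ω₁)) with hu
  set v : ℝ := Real.exp (T / (Γ * Ω₂)) with hv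
  have hu1 : 1 < u := Real.one_lt_exp_iff.mpr hxp
  have hv1 : 1 < v := Real.one_lt_exp_iff.mpr hyp
  have hun : u ≠ 0 := by positivity
  have hvn : v ≠ 0 := by positivity
  -- the ρ-denominators are negative, hence nonzero
  have hq1a : 0 < 1 - u⁻¹ := by
    have : u⁻¹ < 1 := inv_lt_one_of_one_lt₀ hu1
    linarith
  have hq1b : 1 - u⁻¹ < 1 := by
    have : 0 < u⁻¹ := by positivity
    linarith
  have hq2a : 0 < 1 - v⁻¹ := by
    have : v⁻¹ < 1 := inv_lt_one_of_one_lt₀ hv1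
    linarith
  have hq2b : 1 - v⁻¹ < 1 := by
    have : 0 < v⁻¹ := by positivity
    linarith
  have hd1 : (1 - u⁻¹) * (1 - u⁻¹ - 1) * (1 - 2 * (1 - v⁻¹) + 2 * (1 - v⁻¹) ^ 2) +
      (1 - v⁻¹) * (1 - v⁻¹ - 1) ≠ 0 := by
    have key : (1 - u⁻¹) * (1 - u⁻¹ - 1) * (1 - 2 * (1 - v⁻¹) + 2 * (1 - v⁻¹) ^ 2) +
        (1 - v⁻¹) * (1 - v⁻¹ - 1) < 0 := by
      nlinarith [sq_nonneg (1 - v⁻¹), sq_nonneg v⁻¹, mul_pos hq1a (sub_pos.mpr hq1b),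
        mul_pos hq2a (sub_pos.mpr hq2b)]
    linarith
  have hd2 : (1 - v⁻¹) * (1 - v⁻¹ - 1) * (1 - 2 * (1 - u⁻¹) + 2 * (1 - u⁻¹) ^ 2) +
      (1 - u⁻¹) * (1 - u⁻¹ - 1) ≠ 0 := by
    have key : (1 - v⁻¹) * (1 - v⁻¹ - 1) * (1 - 2 * (1 - u⁻¹) + 2 * (1 - u⁻¹) ^ 2) +
        (1 - u⁻¹) * (1 - u⁻¹ - 1) < 0 := by
      nlinarith [sq_nonneg (1 - u⁻¹), sq_nonneg u⁻¹, mul_pos hq2a (sub_pos.mpr hq2b),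
        mul_pos hq1a (sub_pos.mpr hq1b)]
    linarith
  have hD : 2 * u - u * u + 2 * v - v * v - 2 * (u * v) + u * u * v + u * v * v - 2 ≠ 0 := by
    have heq : 2 * u - u * u + 2 * v - v * v - 2 * (u * v) + u * u * v + u * v * v - 2 =
        (v - 1) * ((u - 1) ^ 2 + 1) + (u - 1) * v ^ 2 := by ring
    rw [heq]
    have hA : 0 < (v - 1) * ((u - 1) ^ 2 + 1) :=
      mul_pos (sub_pos.mpr hv1) (by positivity)
    have hB : 0 < (u - 1) * v ^ 2 := mul_pos (sub_pos.mpr hu1) (by positivity)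
    positivity
  have hρ₁' : (1 - v⁻¹) * (1 - v⁻¹ - 1) * (1 - (1 - u⁻¹) + (1 - u⁻¹) ^ 2) /
      ((1 - u⁻¹) * (1 - u⁻¹ - 1) * (1 - 2 * (1 - v⁻¹) + 2 * (1 - v⁻¹) ^ 2) +
        (1 - v⁻¹) * (1 - v⁻¹ - 1)) =
      (v - 1) * (u ^ 2 - u + 1) /
      (2 * u - u * u + 2 * v - v * v - 2 * (u * v) + u * u * v + u * v * v - 2) := by
    rw [div_eq_div_iff hd1 hD]
    field_simp
    ring
  have hρ₂' : (1 - u⁻¹) * (1 - u⁻¹ - 1) * (1 - (1 - v⁻¹) + (1 - v⁻¹) ^ 2) /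
      ((1 - v⁻¹) * (1 - v⁻¹ - 1) * (1 - 2 * (1 - u⁻¹) + 2 * (1 - u⁻¹) ^ 2) +
        (1 - u⁻¹) * (1 - u⁻¹ - 1)) =
      (u - 1) * (v ^ 2 - v + 1) /
      (2 * u - u * u + 2 * v - v * v - 2 * (u * v) + u * u * v + u * v * v - 2) := by
    rw [div_eq_div_iff hd2 hD]
    field_simp
    ring
  rw [hρ₁', hρ₂']
  set K := Real.sqrt (2 * π) with hK
  set s1 := Real.sqrt (T / (Γ * ΩSR₁)) with hs1
  set s2 := Real.sqrt (T / (Γ * ΩR₁D)) with hs2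
  set s3 := Real.sqrt (T / (Γ * ΩSR₂)) with hs3
  set s4 := Real.sqrt (T / (Γ * ΩR₂D)) with hs4
  clear_value K s1 s2 s3 s4
  clear hK hs1 hs2 hs3 hs4 hΩ₁ hΩ₂ hd1 hd2
  field_simp [hD]
  ring
end
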